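/- arXiv:2112.12337 — 10 statements merged into one kernel-verified Lean document; each statement's English description precedes it below -/
import Mathlib

section
/- The cooperative learning objective J(θx, θz) = (1/2)‖y − Xθx − Zθz‖² + (ρ/2)‖Xθx − Zθz‖² + λ(‖θx‖₁ + ‖θz‖₁) is equal to (1/2)‖ỹ − X̃β̃‖² + λ(‖θx‖₁ + ‖θz‖₁), where X̃ is the augmented matrix with top row block [X, Z] and bottom row block [−√ρ X, √ρ Z], ỹ = (y, 0), and β̃ = (θx, θz). In particular, the cooperative regression problem is equivalent to a lasso problem on augmented data. -/
open Matrix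

/-- The cooperative learning objective equals a lasso objective on the augmented data
`X̃ = [[X, Z], [−√ρ X, √ρ Z]]`, `ỹ = (y, 0)`, `β̃ = (θx, θz)`. -/
theorem coop_objective_eq_augmented_lasso
    (n px pz : ℕ) (X : Matrix (Fin n) (Fin px) ℝ) (Z : Matrix (Fin n) (Fin pz) ℝ)
    (y : Fin n → ℝ) (ρ lam : ℝ) (hρ : 0 ≤ ρ) (hlam : 0 ≤ lam)
    (θx : Fin px → ℝ) (θz : Fin pz → ℝ)
    (Xt : Matrix (Fin n ⊕ Fin n) (Fin px ⊕ Fin pz) ℝ)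
    (hXt : Xt = Matrix.fromBlocks X Z (-(Real.sqrt ρ) • X) (Real.sqrt ρ • Z))
    (yt : Fin n ⊕ Fin n → ℝ) (hyt : yt = Sum.elim y 0)
    (βt : Fin px ⊕ Fin pz → ℝ) (hβt : βt = Sum.elim θx θz) :
    (1 / 2) * ∑ i, (y i - (X.mulVec θx i + Z.mulVec θz i)) ^ 2 +
      (ρ / 2) * ∑ i, (X.mulVec θx i - Z.mulVec θz i) ^ 2 +
      lam * ((∑ j, |θx j|) + ∑ j, |θz j|) =
    (1 / 2) * ∑ i, (yt i - Xt.mulVec βt i) ^ 2 +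
      lam * ((∑ j, |θx j|) + ∑ j, |θz j|) := by
  subst hXt hyt hβt
  have hs : Real.sqrt ρ ^ 2 = ρ := Real.sq_sqrt hρ
  rw [Matrix.fromBlocks_mulVec, Fintype.sum_sum_type]
  simp only [Sum.elim_comp_inl, Sum.elim_comp_inr, Sum.elim_inl, Sum.elim_inr,
    Pi.zero_apply, Pi.add_apply, Matrix.smul_mulVec, Matrix.neg_mulVec,
    Pi.smul_apply, Pi.neg_apply, smul_eq_mul]
  generalize hg : Real.sqrt ρ = s at hs ⊢
  have h2 : ∀ i : Fin n,
      (0 - (-s * (X.mulVec θx i) + s * (Z.mulVec θz i))) ^ 2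
      = ρ * (X.mulVec θx i - Z.mulVec θz i) ^ 2 := by
    intro i; rw [← hs]; ring
  simp only [h2]
  rw [← Finset.mul_sum]
  ring
end

section
/- Suppose XᵀZ = 0 and both XᵀX and ZᵀZ are invertible. Then the minimizer of J(θx, θz) = (1/2)‖y − Xθx − Zθz‖² + (ρ/2)‖Xθx − Zθz‖² over (θx, θz) is given by θx = (1+ρ)⁻¹(XᵀX)⁻¹Xᵀy and θz = (1+ρ)⁻¹(ZᵀZ)⁻¹Zᵀy, i.e. the solutions are the separate least squares estimates scaled by 1/(1+ρ). In particular when ρ = 1 the fitted values Xθx + Zθz equal the average of the two separate least-squares predictions. -/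
open Matrix

/-- If `XᵀZ = 0` and `XᵀX`, `ZᵀZ` are invertible, the minimizer of the unpenalized
cooperative objective is the pair of separate least-squares estimates scaled by
`1/(1+ρ)`; and when `ρ = 1` the fitted values are the average of the two separate
least-squares predictions. -/
theorem coop_orthogonal_views_solution
    (n px pz : ℕ) (X : Matrix (Fin n) (Fin px) ℝ) (Z : Matrix (Fin n) (Fin pz) ℝ)
    (y : Fin n → ℝ) (ρ : ℝ) (hρ : 0 ≤ ρ)
    (horth : Xᵀ * Z = 0)
    (hX : IsUnit (Xᵀ * X).det) (hZ : IsUnit (Zᵀ * Z).det)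
    (J : (Fin px → ℝ) → (Fin pz → ℝ) → ℝ)
    (hJ : ∀ θx θz, J θx θz =
      (1 / 2) * ∑ i, (y i - (X.mulVec θx i + Z.mulVec θz i)) ^ 2 +
        (ρ / 2) * ∑ i, (X.mulVec θx i - Z.mulVec θz i) ^ 2)
    (θx : Fin px → ℝ) (θz : Fin pz → ℝ)
    (hθx : θx = (1 + ρ)⁻¹ • (Xᵀ * X)⁻¹.mulVec (Xᵀ.mulVec y))
    (hθz : θz = (1 + ρ)⁻¹ • (Zᵀ * Z)⁻¹.mulVec (Zᵀ.mulVec y)) :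
    (∀ θx' θz', J θx θz ≤ J θx' θz') ∧
      (ρ = 1 →
        (fun i => X.mulVec θx i + Z.mulVec θz i) =
          (1 / 2 : ℝ) • (fun i =>
            X.mulVec ((Xᵀ * X)⁻¹.mulVec (Xᵀ.mulVec y)) i +
              Z.mulVec ((Zᵀ * Z)⁻¹.mulVec (Zᵀ.mulVec y)) i)) := by
  have h1ρ : (1 : ℝ) + ρ ≠ 0 := by positivity
  have hZX : Zᵀ * X = 0 := by
    have := congrArg Matrix.transpose horth
    simpa using this
  set a : Fin n → ℝ := X.mulVec θx with ha
  set b : Fin n → ℝ := Z.mulVec θz with hb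
  have hXa : Xᵀ.mulVec a = (1 + ρ)⁻¹ • Xᵀ.mulVec y := by
    rw [ha, hθx, Matrix.mulVec_smul, Matrix.mulVec_smul, Matrix.mulVec_mulVec,
      Matrix.mulVec_mulVec, Matrix.mul_nonsing_inv _ hX, Matrix.one_mulVec]
  have hZb : Zᵀ.mulVec b = (1 + ρ)⁻¹ • Zᵀ.mulVec y := by
    rw [hb, hθz, Matrix.mulVec_smul, Matrix.mulVec_smul, Matrix.mulVec_mulVec,
      Matrix.mulVec_mulVec, Matrix.mul_nonsing_inv _ hZ, Matrix.one_mulVec]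
  have hXb : Xᵀ.mulVec b = 0 := by
    rw [hb, Matrix.mulVec_mulVec, horth, Matrix.zero_mulVec]
  have hZa : Zᵀ.mulVec a = 0 := by
    rw [ha, Matrix.mulVec_mulVec, hZX, Matrix.zero_mulVec]
  set r : Fin n → ℝ := y - a - b with hr
  -- first-order (normal equation) vanishing
  have hx0 : ∀ u : Fin px → ℝ, (ρ • (a - b) - r) ⬝ᵥ X.mulVec u = 0 := by
    intro u
    have : Xᵀ.mulVec (ρ • (a - b) - r) = 0 := by
      rw [hr, Matrix.mulVec_sub, Matrix.mulVec_smul, Matrix.mulVec_sub,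
        Matrix.mulVec_sub, Matrix.mulVec_sub, hXa, hXb]
      funext i
      simp only [Pi.sub_apply, Pi.smul_apply, Pi.zero_apply, smul_eq_mul]
      field_simp
      ring
    calc (ρ • (a - b) - r) ⬝ᵥ X.mulVec u
        = Xᵀ.mulVec (ρ • (a - b) - r) ⬝ᵥ u := by
          rw [Matrix.dotProduct_mulVec, Matrix.mulVec_transpose]
      _ = 0 := by rw [this, zero_dotProduct]
  have hz0 : ∀ u : Fin pz → ℝ, (ρ • (b - a) - r) ⬝ᵥ Z.mulVec u = 0 := by
    intro u
    have : Zᵀ.mulVec (ρ • (b - a) - r) = 0 := by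
      rw [hr, Matrix.mulVec_sub, Matrix.mulVec_smul, Matrix.mulVec_sub,
        Matrix.mulVec_sub, Matrix.mulVec_sub, hZb, hZa]
      funext i
      simp only [Pi.sub_apply, Pi.smul_apply, Pi.zero_apply, smul_eq_mul]
      field_simp
      ring
    calc (ρ • (b - a) - r) ⬝ᵥ Z.mulVec u
        = Zᵀ.mulVec (ρ • (b - a) - r) ⬝ᵥ u := by
          rw [Matrix.dotProduct_mulVec, Matrix.mulVec_transpose]
      _ = 0 := by rw [this, zero_dotProduct]
  constructor
  · intro θx' θz'
    have key : J θx' θz' = J θx θz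
        + ((ρ • (a - b) - r) ⬝ᵥ (X.mulVec (θx' - θx))
          + (ρ • (b - a) - r) ⬝ᵥ (Z.mulVec (θz' - θz)))
        + ((1 / 2) * ∑ i, (X.mulVec (θx' - θx) i + Z.mulVec (θz' - θz) i) ^ 2
          + (ρ / 2) * ∑ i, (X.mulVec (θx' - θx) i - Z.mulVec (θz' - θz) i) ^ 2) := by
      rw [hJ, hJ]
      simp only [Matrix.mulVec_sub, dotProduct, Pi.sub_apply, Pi.smul_apply,
        smul_eq_mul, Finset.mul_sum, ← Finset.sum_add_distrib, hr, ha, hb]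
      apply Finset.sum_congr rfl
      intro i _
      ring
    rw [key, hx0, hz0]
    have t1 : (0:ℝ) ≤ (1 / 2) * ∑ i, (X.mulVec (θx' - θx) i + Z.mulVec (θz' - θz) i) ^ 2 := by
      positivity
    have t2 : (0:ℝ) ≤ (ρ / 2) * ∑ i, (X.mulVec (θx' - θx) i - Z.mulVec (θz' - θz) i) ^ 2 := by
      positivity
    linarith
  · intro hρ1
    subst hρ1
    funext i
    rw [ha, hb, hθx, hθz, Matrix.mulVec_smul, Matrix.mulVec_smul]
    norm_num
    ring
end

section
/- If X and Z have full column rank, then the unpenalized cooperative regression objective J(θx, θz) = (1/2)‖y − Xθx − Zθz‖² + (ρ/2)‖Xθx − Zθz‖² with ρ > 0 is strictly convex in (θx, θz), and its unique minimizer is (θ̂x, θ̂z) = M⁻¹(Xᵀy, Zᵀy) where M is the block matrix [[(1+ρ)XᵀX, (1−ρ)XᵀZ], [(1−ρ)ZᵀX, (1+ρ)ZᵀZ]]. -/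
open Matrix

private lemma coop_dot {n p q : ℕ} (A : Matrix (Fin n) (Fin p) ℝ)
    (B : Matrix (Fin n) (Fin q) ℝ) (v : Fin p → ℝ) (w : Fin q → ℝ) :
    v ⬝ᵥ (Aᵀ * B) *ᵥ w = (A *ᵥ v) ⬝ᵥ (B *ᵥ w) := by
  rw [← mulVec_mulVec, dotProduct_mulVec, vecMul_transpose]

/-- If `X` and `Z` have full column rank and `ρ > 0`, the unpenalized cooperative
objective is strictly convex in the joint variable `(θx, θz)`, and its unique
minimizer is `M⁻¹(Xᵀy, Zᵀy)` for the block matrix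
`M = [[(1+ρ)XᵀX, (1−ρ)XᵀZ], [(1−ρ)ZᵀX, (1+ρ)ZᵀZ]]`. -/
theorem coop_strictly_convex_unique_minimizer
    (n px pz : ℕ) (X : Matrix (Fin n) (Fin px) ℝ) (Z : Matrix (Fin n) (Fin pz) ℝ)
    (y : Fin n → ℝ) (ρ : ℝ) (hρ : 0 < ρ)
    (hX : ∀ v : Fin px → ℝ, X.mulVec v = 0 → v = 0)
    (hZ : ∀ w : Fin pz → ℝ, Z.mulVec w = 0 → w = 0)
    (J : (Fin px → ℝ) × (Fin pz → ℝ) → ℝ)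
    (hJ : ∀ θ, J θ =
      (1 / 2) * ∑ i, (y i - (X.mulVec θ.1 i + Z.mulVec θ.2 i)) ^ 2 +
        (ρ / 2) * ∑ i, (X.mulVec θ.1 i - Z.mulVec θ.2 i) ^ 2)
    (M : Matrix (Fin px ⊕ Fin pz) (Fin px ⊕ Fin pz) ℝ)
    (hM : M = Matrix.fromBlocks
        ((1 + ρ) • (Xᵀ * X)) ((1 - ρ) • (Xᵀ * Z))
        ((1 - ρ) • (Zᵀ * X)) ((1 + ρ) • (Zᵀ * Z)))
    (θhat : (Fin px → ℝ) × (Fin pz → ℝ))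
    (hθhat : θhat = (fun j => M⁻¹.mulVec (Sum.elim (Xᵀ.mulVec y) (Zᵀ.mulVec y)) (Sum.inl j),
      fun j => M⁻¹.mulVec (Sum.elim (Xᵀ.mulVec y) (Zᵀ.mulVec y)) (Sum.inr j))) :
    StrictConvexOn ℝ Set.univ J ∧
      (∀ θ, J θhat ≤ J θ) ∧
      (∀ θ, (∀ θ', J θ ≤ J θ') → θ = θhat) := by
  -- abbreviations
  set c : Fin px ⊕ Fin pz → ℝ := Sum.elim (Xᵀ.mulVec y) (Zᵀ.mulVec y) with hc
  set u : (Fin px → ℝ) × (Fin pz → ℝ) → (Fin px ⊕ Fin pz → ℝ) :=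
    fun θ => Sum.elim θ.1 θ.2 with hu
  -- the quadratic form of M
  have key : ∀ v : Fin px ⊕ Fin pz → ℝ,
      v ⬝ᵥ M *ᵥ v =
        ∑ i, ((X *ᵥ (v ∘ Sum.inl)) i + (Z *ᵥ (v ∘ Sum.inr)) i) ^ 2 +
          ρ * ∑ i, ((X *ᵥ (v ∘ Sum.inl)) i - (Z *ᵥ (v ∘ Sum.inr)) i) ^ 2 := by
    intro v
    have hv : v = Sum.elim (v ∘ Sum.inl) (v ∘ Sum.inr) := (Sum.elim_comp_inl_inr v).symm
    conv_lhs => rw [hv, hM, fromBlocks_mulVec, sumElim_dotProduct_sumElim]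
    simp only [smul_mulVec, dotProduct_add, dotProduct_smul, smul_eq_mul,
      coop_dot, Sum.elim_comp_inl, Sum.elim_comp_inr]
    simp only [dotProduct, Finset.mul_sum, ← Finset.sum_add_distrib,
      ← Finset.sum_sub_distrib]
    refine Finset.sum_congr rfl fun i _ => by ring
  have hsym : Mᵀ = M := by
    rw [hM, fromBlocks_transpose]
    simp [transpose_smul, transpose_mul, transpose_transpose]
  have hbil : ∀ v w, v ⬝ᵥ M *ᵥ w = w ⬝ᵥ M *ᵥ v := by
    intro v w
    rw [dotProduct_mulVec, ← hsym, vecMul_transpose, hsym]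
    exact dotProduct_comm _ _
  -- positivity of the quadratic form
  have hpos : ∀ v, 0 ≤ v ⬝ᵥ M *ᵥ v := by
    intro v; rw [key v]; positivity
  have hdef : ∀ v, v ⬝ᵥ M *ᵥ v = 0 → v = 0 := by
    intro v hv
    rw [key v] at hv
    have h1 : (0:ℝ) ≤ ∑ i, ((X *ᵥ (v ∘ Sum.inl)) i + (Z *ᵥ (v ∘ Sum.inr)) i) ^ 2 :=
      Finset.sum_nonneg fun i _ => sq_nonneg _
    have h2 : (0:ℝ) ≤ ∑ i, ((X *ᵥ (v ∘ Sum.inl)) i - (Z *ᵥ (v ∘ Sum.inr)) i) ^ 2 :=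
      Finset.sum_nonneg fun i _ => sq_nonneg _
    have e1 : ∑ i, ((X *ᵥ (v ∘ Sum.inl)) i + (Z *ᵥ (v ∘ Sum.inr)) i) ^ 2 = 0 := by nlinarith
    have e2 : ∑ i, ((X *ᵥ (v ∘ Sum.inl)) i - (Z *ᵥ (v ∘ Sum.inr)) i) ^ 2 = 0 := by nlinarith
    have f1 : ∀ i, ((X *ᵥ (v ∘ Sum.inl)) i + (Z *ᵥ (v ∘ Sum.inr)) i) = 0 := by
      intro i
      have := (Finset.sum_eq_zero_iff_of_nonneg (fun i _ => sq_nonneg _)).mp e1 i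
        (Finset.mem_univ i)
      exact pow_eq_zero_iff (two_ne_zero) |>.mp this
    have f2 : ∀ i, ((X *ᵥ (v ∘ Sum.inl)) i - (Z *ᵥ (v ∘ Sum.inr)) i) = 0 := by
      intro i
      have := (Finset.sum_eq_zero_iff_of_nonneg (fun i _ => sq_nonneg _)).mp e2 i
        (Finset.mem_univ i)
      exact pow_eq_zero_iff (two_ne_zero) |>.mp this
    have hXa : X *ᵥ (v ∘ Sum.inl) = 0 := by
      funext i; have := f1 i; have := f2 i; simpa using by linarith
    have hZb : Z *ᵥ (v ∘ Sum.inr) = 0 := by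
      funext i; have := f1 i; have := f2 i; simpa using by linarith
    have ha := hX _ hXa
    have hb := hZ _ hZb
    funext x
    cases x with
    | inl j => exact congrFun ha j
    | inr j => exact congrFun hb j
  -- M is invertible
  have hMdet : IsUnit M.det := by
    rw [← isUnit_iff_isUnit_det]
    rw [← mulVec_injective_iff_isUnit]
    intro v w hvw
    have : M *ᵥ (v - w) = 0 := by rw [mulVec_sub, hvw, sub_self]
    have h0 : (v - w) ⬝ᵥ M *ᵥ (v - w) = 0 := by rw [this, dotProduct_zero]
    have := hdef _ h0
    exact sub_eq_zero.mp this
  have hMc : M *ᵥ (M⁻¹ *ᵥ c) = c := by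
    rw [mulVec_mulVec, Matrix.mul_nonsing_inv _ hMdet, one_mulVec]
  set uhat : Fin px ⊕ Fin pz → ℝ := M⁻¹ *ᵥ c with huhatdef
  have huhat : u θhat = uhat := by
    rw [hθhat]; funext x; cases x <;> rfl
  -- expansion of J
  have hJexp : ∀ θ, J θ = (1/2) * (y ⬝ᵥ y) - c ⬝ᵥ (u θ) + (1/2) * ((u θ) ⬝ᵥ M *ᵥ (u θ)) := by
    intro θ
    rw [hJ, key]
    have h1 : (u θ) ∘ Sum.inl = θ.1 := rfl
    have h2 : (u θ) ∘ Sum.inr = θ.2 := rfl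
    rw [h1, h2]
    have h3 : c ⬝ᵥ (u θ) = y ⬝ᵥ (X *ᵥ θ.1) + y ⬝ᵥ (Z *ᵥ θ.2) := by
      rw [hc, hu, sumElim_dotProduct_sumElim, mulVec_transpose, mulVec_transpose,
        ← dotProduct_mulVec, ← dotProduct_mulVec]
    rw [h3]
    simp only [dotProduct, Finset.mul_sum, ← Finset.sum_add_distrib,
      ← Finset.sum_sub_distrib]
    refine Finset.sum_congr rfl fun i _ => by ring
  -- bilinear expansion
  have quad : ∀ (v w : Fin px ⊕ Fin pz → ℝ) (s t : ℝ),
      (s • v + t • w) ⬝ᵥ M *ᵥ (s • v + t • w) =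
        s^2 * (v ⬝ᵥ M *ᵥ v) + 2*s*t*(v ⬝ᵥ M *ᵥ w) + t^2 * (w ⬝ᵥ M *ᵥ w) := by
    intro v w s t
    simp only [mulVec_add, mulVec_smul, dotProduct_add, add_dotProduct,
      dotProduct_smul, smul_dotProduct, smul_eq_mul]
    rw [hbil w v]
    ring
  have hd12 : ∀ (v w : Fin px ⊕ Fin pz → ℝ),
      (v - w) ⬝ᵥ M *ᵥ (v - w) =
        (v ⬝ᵥ M *ᵥ v) - 2*(v ⬝ᵥ M *ᵥ w) + (w ⬝ᵥ M *ᵥ w) := by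
    intro v w
    have h := quad v w 1 (-1)
    rw [one_smul, neg_one_smul, ← sub_eq_add_neg] at h
    rw [h]; ring
  -- key difference identity
  have hdiff : ∀ θ, J θ = J θhat + (1/2) * ((u θ - uhat) ⬝ᵥ M *ᵥ (u θ - uhat)) := by
    intro θ
    have e1 : (u θ) ⬝ᵥ M *ᵥ uhat = u θ ⬝ᵥ c := by rw [huhatdef, hMc]
    have e3 : uhat ⬝ᵥ M *ᵥ uhat = c ⬝ᵥ uhat := by
      rw [hMc]; exact dotProduct_comm _ _
    rw [hd12, hJexp θ, hJexp θhat, huhat, e1, e3]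
    rw [dotProduct_comm c (u θ)]
    ring
  refine ⟨?_, ?_, ?_⟩
  · -- strict convexity
    refine ⟨convex_univ, ?_⟩
    intro θ1 _ θ2 _ hne a b ha hb hab
    have hucomb : u (a • θ1 + b • θ2) = a • u θ1 + b • u θ2 := by
      funext x; cases x <;>
        simp [hu, Prod.fst_add, Prod.snd_add, Prod.smul_fst, Prod.smul_snd]
    have hQc := quad (u θ1) (u θ2) a b
    have huneq : u θ1 - u θ2 ≠ 0 := by
      intro h
      apply hne
      have h' : u θ1 = u θ2 := by
        have := sub_eq_zero.mp h; exact this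
      exact Prod.ext (funext fun j => congrFun h' (Sum.inl j))
        (funext fun j => congrFun h' (Sum.inr j))
    have hQd : 0 < (u θ1 - u θ2) ⬝ᵥ M *ᵥ (u θ1 - u θ2) := by
      rcases lt_or_eq_of_le (hpos (u θ1 - u θ2)) with h | h
      · exact h
      · exact absurd (hdef _ h.symm) huneq
    rw [hd12] at hQd
    have hlin : c ⬝ᵥ (a • u θ1 + b • u θ2) = a * (c ⬝ᵥ u θ1) + b * (c ⬝ᵥ u θ2) := by
      rw [dotProduct_add, dotProduct_smul, dotProduct_smul]; rfl
    rw [hJexp (a • θ1 + b • θ2), hJexp θ1, hJexp θ2, hucomb, hlin, hQc]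
    have hid : a * (u θ1 ⬝ᵥ M *ᵥ u θ1) + b * (u θ2 ⬝ᵥ M *ᵥ u θ2) -
        (a^2 * (u θ1 ⬝ᵥ M *ᵥ u θ1) + 2*a*b*(u θ1 ⬝ᵥ M *ᵥ u θ2) +
          b^2 * (u θ2 ⬝ᵥ M *ᵥ u θ2)) =
        a * b * ((u θ1 ⬝ᵥ M *ᵥ u θ1) - 2*(u θ1 ⬝ᵥ M *ᵥ u θ2) +
          (u θ2 ⬝ᵥ M *ᵥ u θ2)) := by
      have hb' : b = 1 - a := by linarith
      rw [hb']; ring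
    have hprod : 0 < a * b * ((u θ1 ⬝ᵥ M *ᵥ u θ1) - 2*(u θ1 ⬝ᵥ M *ᵥ u θ2) +
        (u θ2 ⬝ᵥ M *ᵥ u θ2)) := mul_pos (mul_pos ha hb) hQd
    have hab1 : a + b = 1 := hab
    have hKsum : a * (1/2 * (y ⬝ᵥ y)) + b * (1/2 * (y ⬝ᵥ y)) = 1/2 * (y ⬝ᵥ y) := by
      rw [← add_mul, hab1, one_mul]
    simp only [smul_eq_mul]
    nlinarith [hid, hprod, hKsum]
  · intro θ
    rw [hdiff θ]
    have := hpos (u θ - uhat)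
    linarith
  · intro θ hmin
    have h1 : J θ ≤ J θhat := hmin θhat
    have h2 : J θhat ≤ J θ := by rw [hdiff θ]; have := hpos (u θ - uhat); linarith
    have heq : J θ = J θhat := le_antisymm h1 h2
    have h0 : (u θ - uhat) ⬝ᵥ M *ᵥ (u θ - uhat) = 0 := by
      have := hdiff θ; rw [heq] at this; linarith
    have := hdef _ h0
    have hueq : u θ = uhat := sub_eq_zero.mp this
    rw [hθhat]
    exact Prod.ext (funext fun j => congrFun hueq (Sum.inl j))
      (funext fun j => congrFun hueq (Sum.inr j))
end

section
/- Fix θz. The function θx ↦ (1/2)‖y − Xθx − Zθz‖² + (ρ/2)‖Xθx − Zθz‖² differs by a constant (not depending on θx) from θx ↦ ((1+ρ)/2)‖y* − Xθx‖², where y* = y/(1+ρ) − (1−ρ)Zθz/(1+ρ). Consequently, for fixed θz the partial minimization of the cooperative objective over θx is equivalent to a least squares problem with the penalty-adjusted partial residual y* as response. -/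
open Matrix

/-- For fixed `θz`, the cooperative objective as a function of `θx` differs by a
constant from `((1+ρ)/2)‖y* − Xθx‖²` where `y* = y/(1+ρ) − (1−ρ)Zθz/(1+ρ)` is the
penalty-adjusted partial residual. -/
theorem coop_partial_residual_equivalence
    (n px pz : ℕ) (X : Matrix (Fin n) (Fin px) ℝ) (Z : Matrix (Fin n) (Fin pz) ℝ)
    (y : Fin n → ℝ) (ρ : ℝ) (hρ : 0 ≤ ρ) (θz : Fin pz → ℝ)
    (ystar : Fin n → ℝ)
    (hystar : ystar = fun i => y i / (1 + ρ) - (1 - ρ) * Z.mulVec θz i / (1 + ρ)) :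
    ∃ C : ℝ, ∀ θx : Fin px → ℝ,
      (1 / 2) * ∑ i, (y i - (X.mulVec θx i + Z.mulVec θz i)) ^ 2 +
          (ρ / 2) * ∑ i, (X.mulVec θx i - Z.mulVec θz i) ^ 2 =
        ((1 + ρ) / 2) * ∑ i, (ystar i - X.mulVec θx i) ^ 2 + C := by
  have h1 : (1 : ℝ) + ρ ≠ 0 := by positivity
  subst hystar
  refine ⟨∑ i, ((1 / 2) * (y i - Z.mulVec θz i) ^ 2 + (ρ / 2) * (Z.mulVec θz i) ^ 2
      - ((1 + ρ) / 2) * (y i / (1 + ρ) - (1 - ρ) * Z.mulVec θz i / (1 + ρ)) ^ 2),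
    fun θx => ?_⟩
  simp only [Finset.mul_sum, ← Finset.sum_add_distrib]
  refine Finset.sum_congr rfl fun i _ => ?_
  field_simp
  ring
end

section
/- In the population cooperative learning problem minimizing E[(1/2)(y − f_X(X) − f_Z(Z))² + (ρ/2)(f_X(X) − f_Z(Z))²], any minimizer (f_X, f_Z) satisfies the fixed-point equations f_X(X) = E[y/(1+ρ) − (1−ρ)f_Z(Z)/(1+ρ) | X] and f_Z(Z) = E[y/(1+ρ) − (1−ρ)f_X(X)/(1+ρ) | Z] almost surely. -/
open MeasureTheory

private lemma quad_nonneg_coeff_zero {c d : ℝ} (hd : 0 ≤ d)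
    (h : ∀ t : ℝ, 0 ≤ t * c + t ^ 2 * d) : c = 0 := by
  have h1 := h (-c / (d + 1))
  have hd1 : (0:ℝ) < d + 1 := by linarith
  have : (-c / (d+1)) * c + (-c / (d+1))^2 * d = -c^2 / (d+1)^2 := by
    field_simp; ring
  rw [this] at h1
  rcases div_nonneg_iff.mp h1 with ⟨h2, _⟩ | ⟨_, h3⟩
  · nlinarith
  · nlinarith [sq_nonneg (d+1)]

private lemma coop_aux
    {Ω E : Type*} [MeasurableSpace Ω] [MeasurableSpace E]
    (μ : Measure Ω) [IsProbabilityMeasure μ]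
    (W : Ω → E) (hW : Measurable W)
    (y k : Ω → ℝ) (hy : MemLp y 2 μ) (hk : MemLp k 2 μ)
    (ρ : ℝ) (hρ : 0 ≤ ρ)
    (f : E → ℝ) (hf : Measurable f) (hf2 : MemLp (fun ω => f (W ω)) 2 μ)
    (hmin : ∀ g : E → ℝ, Measurable g → MemLp (fun ω => g (W ω)) 2 μ →
      (∫ ω, ((1 / 2) * (y ω - f (W ω) - k ω) ^ 2 +
          (ρ / 2) * (f (W ω) - k ω) ^ 2) ∂μ) ≤
        ∫ ω, ((1 / 2) * (y ω - g (W ω) - k ω) ^ 2 +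
          (ρ / 2) * (g (W ω) - k ω) ^ 2) ∂μ) :
    (fun ω => f (W ω)) =ᵐ[μ]
      μ[fun ω => y ω / (1 + ρ) - (1 - ρ) * k ω / (1 + ρ) |
        MeasurableSpace.comap W inferInstance] := by
  have hm : MeasurableSpace.comap W inferInstance ≤ ‹MeasurableSpace Ω› := hW.comap_le
  have hρ1 : (0:ℝ) < 1 + ρ := by linarith
  set h : Ω → ℝ := fun ω => f (W ω) with hh_def
  set T : Ω → ℝ := fun ω => y ω / (1 + ρ) - (1 - ρ) * k ω / (1 + ρ) with hT_def
  have hT2 : MemLp T 2 μ := by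
    have h1 : MemLp (fun ω => y ω / (1 + ρ)) 2 μ := by
      simpa [div_eq_mul_inv, mul_comm] using hy.const_mul (1 + ρ)⁻¹
    have h2 : MemLp (fun ω => (1 - ρ) * k ω / (1 + ρ)) 2 μ := by
      simpa [div_eq_mul_inv, mul_assoc, mul_comm, mul_left_comm] using
        hk.const_mul ((1 - ρ) * (1 + ρ)⁻¹)
    exact h1.sub h2
  have hTint : Integrable T μ := hT2.integrable one_le_two
  have hhint : Integrable h μ := hf2.integrable one_le_two
  set φ : Ω → ℝ := fun ω => (1 + ρ) * h ω + (1 - ρ) * k ω - y ω with hφ_def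
  have hφ2 : MemLp φ 2 μ := ((hf2.const_mul _).add (hk.const_mul _)).sub hy
  have hφint : Integrable φ μ := hφ2.integrable one_le_two
  -- base integrand integrable
  have hBint : Integrable
      (fun ω => (1 / 2) * (y ω - h ω - k ω) ^ 2 + (ρ / 2) * (h ω - k ω) ^ 2) μ := by
    exact ((((hy.sub hf2).sub hk).integrable_sq).const_mul _).add
      (((hf2.sub hk).integrable_sq).const_mul _)
  refine ae_eq_condExp_of_forall_setIntegral_eq hm hTint
    (fun s hs hμs => hhint.integrableOn)
    (fun s hs hμs => ?_)
    (StronglyMeasurable.aestronglyMeasurable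
      ((hf.comp (Measurable.of_comap_le le_rfl)).stronglyMeasurable))
  -- s = W ⁻¹' A
  obtain ⟨A, hA, rfl⟩ := hs
  set s : Set Ω := W ⁻¹' A with hs_def
  have hsΩ : MeasurableSet s := hW hA
  -- first-order condition
  have key : ∀ t : ℝ, 0 ≤ t * (∫ ω in s, φ ω ∂μ) + t ^ 2 * (((1 + ρ) / 2) * (μ s).toReal) := by
    intro t
    set g : E → ℝ := fun e => f e + A.indicator (fun _ => t) e with hg_def
    have hg_meas : Measurable g := hf.add (measurable_const.indicator hA)
    have hgW : ∀ ω, g (W ω) = h ω + s.indicator (fun _ => t) ω := by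
      intro ω
      by_cases hω : W ω ∈ A <;>
        simp [hg_def, hh_def, hs_def, Set.indicator_of_mem, Set.indicator_of_notMem,
          Set.mem_preimage, hω]
    have hgW2 : MemLp (fun ω => g (W ω)) 2 μ := by
      rw [show (fun ω => g (W ω)) = fun ω => h ω + s.indicator (fun _ => t) ω from funext hgW]
      exact hf2.add (memLp_indicator_const 2 hsΩ t (Or.inr (measure_ne_top μ s)))
    have hle := hmin g hg_meas hgW2
    -- pointwise expansion
    have hexp : ∀ ω, (1 / 2) * (y ω - g (W ω) - k ω) ^ 2 + (ρ / 2) * (g (W ω) - k ω) ^ 2 =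
        ((1 / 2) * (y ω - h ω - k ω) ^ 2 + (ρ / 2) * (h ω - k ω) ^ 2) +
        (t * s.indicator φ ω + t ^ 2 * (((1 + ρ) / 2) * s.indicator (fun _ => (1:ℝ)) ω)) := by
      intro ω
      rw [hgW ω]
      by_cases hω : ω ∈ s
      · rw [Set.indicator_of_mem hω, Set.indicator_of_mem hω, Set.indicator_of_mem hω]
        simp only [hφ_def]; ring
      · rw [Set.indicator_of_notMem hω, Set.indicator_of_notMem hω,
          Set.indicator_of_notMem hω]
        ring
    have hI1 : Integrable (fun ω => t * s.indicator φ ω) μ :=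
      (hφint.indicator hsΩ).const_mul t
    have hI2 : Integrable (fun ω => t ^ 2 * (((1 + ρ) / 2) * s.indicator (fun _ => (1:ℝ)) ω)) μ := by
      exact (((integrable_indicator_iff hsΩ).mpr ((integrableOn_const_iff (C := (1:ℝ))).mpr
        (Or.inr (measure_lt_top μ s)))).const_mul _).const_mul _
    rw [show (fun ω => (1 / 2) * (y ω - g (W ω) - k ω) ^ 2 + (ρ / 2) * (g (W ω) - k ω) ^ 2) =
        (fun ω => ((1 / 2) * (y ω - h ω - k ω) ^ 2 + (ρ / 2) * (h ω - k ω) ^ 2) +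
          (t * s.indicator φ ω + t ^ 2 * (((1 + ρ) / 2) * s.indicator (fun _ => (1:ℝ)) ω)))
      from funext hexp] at hle
    have hI12 : Integrable (fun ω => t * s.indicator φ ω +
        t ^ 2 * (((1 + ρ) / 2) * s.indicator (fun _ => (1:ℝ)) ω)) μ := hI1.add hI2
    rw [integral_add hBint hI12, integral_add hI1 hI2] at hle
    have e1 : ∫ ω, t * s.indicator φ ω ∂μ = t * ∫ ω in s, φ ω ∂μ := by
      rw [integral_const_mul, integral_indicator hsΩ]
    have e2 : ∫ ω, t ^ 2 * (((1 + ρ) / 2) * s.indicator (fun _ => (1:ℝ)) ω) ∂μ =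
        t ^ 2 * (((1 + ρ) / 2) * (μ s).toReal) := by
      rw [integral_const_mul, integral_const_mul, integral_indicator hsΩ]
      simp [measureReal_def]
    rw [e1, e2] at hle
    linarith
  have hc : (∫ ω in s, φ ω ∂μ) = 0 := by
    refine quad_nonneg_coeff_zero ?_ key
    positivity
  -- conclude set-integral equality
  have hsub : ∫ ω in s, (h ω - T ω) ∂μ = (∫ ω in s, φ ω ∂μ) / (1 + ρ) := by
    rw [eq_div_iff hρ1.ne', ← integral_mul_const]
    refine setIntegral_congr_fun hsΩ fun ω _ => ?_
    simp only [hT_def, hφ_def]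
    field_simp
    ring
  rw [hc, zero_div] at hsub
  have := integral_sub (hhint.integrableOn (s := s)) (hTint.integrableOn (s := s))
  rw [this] at hsub
  linarith


/-- Any minimizer of the population cooperative learning objective satisfies the
fixed-point equations
`f_X(X) = E[y/(1+ρ) − (1−ρ)f_Z(Z)/(1+ρ) | X]` and
`f_Z(Z) = E[y/(1+ρ) − (1−ρ)f_X(X)/(1+ρ) | Z]` almost surely. -/
theorem coop_population_fixed_point
    {Ω EX EZ : Type*} [MeasurableSpace Ω] [MeasurableSpace EX] [MeasurableSpace EZ]
    (μ : Measure Ω) [IsProbabilityMeasure μ]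
    (X : Ω → EX) (Z : Ω → EZ) (y : Ω → ℝ)
    (hX : Measurable X) (hZ : Measurable Z) (hy : MemLp y 2 μ)
    (ρ : ℝ) (hρ : 0 ≤ ρ)
    (fX : EX → ℝ) (fZ : EZ → ℝ) (hfX : Measurable fX) (hfZ : Measurable fZ)
    (hfX2 : MemLp (fun ω => fX (X ω)) 2 μ) (hfZ2 : MemLp (fun ω => fZ (Z ω)) 2 μ)
    (hmin : ∀ (gX : EX → ℝ) (gZ : EZ → ℝ), Measurable gX → Measurable gZ →
      MemLp (fun ω => gX (X ω)) 2 μ → MemLp (fun ω => gZ (Z ω)) 2 μ →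
      (∫ ω, ((1 / 2) * (y ω - fX (X ω) - fZ (Z ω)) ^ 2 +
          (ρ / 2) * (fX (X ω) - fZ (Z ω)) ^ 2) ∂μ) ≤
        ∫ ω, ((1 / 2) * (y ω - gX (X ω) - gZ (Z ω)) ^ 2 +
          (ρ / 2) * (gX (X ω) - gZ (Z ω)) ^ 2) ∂μ) :
    (fun ω => fX (X ω)) =ᵐ[μ]
      μ[fun ω => y ω / (1 + ρ) - (1 - ρ) * fZ (Z ω) / (1 + ρ) |
        MeasurableSpace.comap X inferInstance] ∧
    (fun ω => fZ (Z ω)) =ᵐ[μ]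
      μ[fun ω => y ω / (1 + ρ) - (1 - ρ) * fX (X ω) / (1 + ρ) |
        MeasurableSpace.comap Z inferInstance] := by
  constructor
  · exact coop_aux μ X hX y (fun ω => fZ (Z ω)) hy hfZ2 ρ hρ fX hfX hfX2
      (fun g hg hg2 => hmin g fZ hg hfZ hg2 hfZ2)
  · refine coop_aux μ Z hZ y (fun ω => fX (X ω)) hy hfX2 ρ hρ fZ hfZ hfZ2 ?_
    intro g hg hg2
    have H := hmin fX g hfX hg hfX2 hg2
    have e1 : (∫ ω, ((1 / 2) * (y ω - fZ (Z ω) - fX (X ω)) ^ 2 +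
        (ρ / 2) * (fZ (Z ω) - fX (X ω)) ^ 2) ∂μ) =
        ∫ ω, ((1 / 2) * (y ω - fX (X ω) - fZ (Z ω)) ^ 2 +
          (ρ / 2) * (fX (X ω) - fZ (Z ω)) ^ 2) ∂μ := by
      congr 1; funext ω; ring
    have e2 : (∫ ω, ((1 / 2) * (y ω - g (Z ω) - fX (X ω)) ^ 2 +
        (ρ / 2) * (g (Z ω) - fX (X ω)) ^ 2) ∂μ) =
        ∫ ω, ((1 / 2) * (y ω - fX (X ω) - g (Z ω)) ^ 2 +
          (ρ / 2) * (fX (X ω) - g (Z ω)) ^ 2) ∂μ := by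
      congr 1; funext ω; ring
    rw [e1, e2]
    exact H
end

section
/- In the population cooperative learning problem with ρ = 1, minimizing E[(1/2)(y − f_X(X) − f_Z(Z))² + (1/2)(f_X(X) − f_Z(Z))²], the fixed-point equations reduce to f_X(X) = (1/2)E[y | X] and f_Z(Z) = (1/2)E[y | Z]; i.e. the optimal prediction f_X(X)+f_Z(Z) is the average of the two marginal regression functions E[y|X] and E[y|Z]. -/
open MeasureTheory

lemma quad_zero (B C : ℝ) (hC : 0 ≤ C) (h : ∀ t : ℝ, 0 ≤ t * B + t ^ 2 * C) : B = 0 := by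
  have hpos : (0:ℝ) < 2 * C + 1 := by linarith
  have h1 := h (-(B / (2 * C + 1)))
  have h2 : -(B / (2 * C + 1)) * B + (-(B / (2 * C + 1))) ^ 2 * C
      = -(B ^ 2 * (C + 1)) / (2 * C + 1) ^ 2 := by
    field_simp
    ring
  rw [h2] at h1
  have h3 : (0:ℝ) < (2 * C + 1) ^ 2 := by positivity
  have h4 : 0 ≤ -(B ^ 2 * (C + 1)) := by
    have := (div_nonneg_iff).mp h1
    rcases this with ⟨h5, _⟩ | ⟨_, h6⟩
    · exact h5
    · nlinarith
  nlinarith [sq_nonneg B]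

lemma coop_aux_s8 {Ω : Type*} [MeasurableSpace Ω] (μ : Measure Ω) [IsProbabilityMeasure μ]
    (y a b h : Ω → ℝ) (hy : MemLp y 2 μ) (ha : MemLp a 2 μ) (hb : MemLp b 2 μ)
    (hh : Measurable h) (hhb : ∀ ω, ‖h ω‖ ≤ 1)
    (hmin : ∀ t : ℝ,
      (∫ ω, ((1/2 : ℝ) * (y ω - a ω - b ω) ^ 2 + (1/2 : ℝ) * (a ω - b ω) ^ 2) ∂μ) ≤
        ∫ ω, ((1/2 : ℝ) * (y ω - (a ω + t * h ω) - b ω) ^ 2 +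
          (1/2 : ℝ) * ((a ω + t * h ω) - b ω) ^ 2) ∂μ) :
    ∫ ω, h ω * (2 * a ω - y ω) ∂μ = 0 := by
  have hu : MemLp (fun ω => y ω - a ω - b ω) 2 μ := (hy.sub ha).sub hb
  have hv : MemLp (fun ω => a ω - b ω) 2 μ := ha.sub hb
  have Iorig : Integrable
      (fun ω => (1/2 : ℝ) * (y ω - a ω - b ω) ^ 2 + (1/2 : ℝ) * (a ω - b ω) ^ 2) μ :=
    (hu.integrable_sq.const_mul _).add (hv.integrable_sq.const_mul _)
  have hg : Integrable (fun ω => 2 * a ω - y ω) μ :=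
    ((ha.const_mul 2).sub hy).integrable one_le_two
  have I1 : Integrable (fun ω => h ω * (2 * a ω - y ω)) μ :=
    hg.bdd_mul hh.aestronglyMeasurable (c := 1) (Filter.Eventually.of_forall hhb)
  have Ih : Integrable h μ := by
    have := (integrable_const (1:ℝ) (μ := μ)).bdd_mul hh.aestronglyMeasurable (c := 1) (Filter.Eventually.of_forall hhb)
    simpa using this
  have I2 : Integrable (fun ω => h ω ^ 2) μ := by
    have := Ih.bdd_mul hh.aestronglyMeasurable (c := 1) (Filter.Eventually.of_forall hhb)
    simpa [sq] using this
  set B := ∫ ω, h ω * (2 * a ω - y ω) ∂μ with hB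
  set C := ∫ ω, h ω ^ 2 ∂μ with hCdef
  have hC : 0 ≤ C := integral_nonneg fun ω => sq_nonneg _
  refine quad_zero B C hC fun t => ?_
  have key : (fun ω => (1/2 : ℝ) * (y ω - (a ω + t * h ω) - b ω) ^ 2 +
      (1/2 : ℝ) * ((a ω + t * h ω) - b ω) ^ 2)
      = fun ω => ((1/2 : ℝ) * (y ω - a ω - b ω) ^ 2 + (1/2 : ℝ) * (a ω - b ω) ^ 2) +
        (t * (h ω * (2 * a ω - y ω)) + t ^ 2 * h ω ^ 2) := by
    funext ω; ring
  have hint : (∫ ω, ((1/2 : ℝ) * (y ω - (a ω + t * h ω) - b ω) ^ 2 +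
      (1/2 : ℝ) * ((a ω + t * h ω) - b ω) ^ 2) ∂μ)
      = (∫ ω, ((1/2 : ℝ) * (y ω - a ω - b ω) ^ 2 + (1/2 : ℝ) * (a ω - b ω) ^ 2) ∂μ)
        + (t * B + t ^ 2 * C) := by
    have ID : Integrable (fun ω => t * (h ω * (2 * a ω - y ω)) + t ^ 2 * h ω ^ 2) μ :=
      (I1.const_mul t).add (I2.const_mul (t ^ 2))
    have ID1 : Integrable (fun ω => t * (h ω * (2 * a ω - y ω))) μ := I1.const_mul t
    have ID2 : Integrable (fun ω => t ^ 2 * h ω ^ 2) μ := I2.const_mul (t ^ 2)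
    rw [key, integral_add Iorig ID, integral_add ID1 ID2,
      integral_const_mul, integral_const_mul]
  have := hmin t
  rw [hint] at this
  linarith

lemma coop_half {Ω E : Type*} [MeasurableSpace Ω] [MeasurableSpace E]
    (μ : Measure Ω) [IsProbabilityMeasure μ]
    (W : Ω → E) (hW : Measurable W) (y b : Ω → ℝ) (hy : MemLp y 2 μ) (hb : MemLp b 2 μ)
    (f : E → ℝ) (hf : Measurable f) (hf2 : MemLp (fun ω => f (W ω)) 2 μ)
    (hmin : ∀ g : E → ℝ, Measurable g → MemLp (fun ω => g (W ω)) 2 μ →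
      (∫ ω, ((1/2 : ℝ) * (y ω - f (W ω) - b ω) ^ 2 + (1/2 : ℝ) * (f (W ω) - b ω) ^ 2) ∂μ) ≤
        ∫ ω, ((1/2 : ℝ) * (y ω - g (W ω) - b ω) ^ 2 + (1/2 : ℝ) * (g (W ω) - b ω) ^ 2) ∂μ) :
    (fun ω => f (W ω)) =ᵐ[μ]
      fun ω => (1/2 : ℝ) * (μ[y | MeasurableSpace.comap W inferInstance]) ω := by
  have hm : MeasurableSpace.comap W inferInstance ≤ _ := hW.comap_le
  have hvar : ∀ s : Set E, MeasurableSet s →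
      ∫ ω, (W ⁻¹' s).indicator (fun _ => (1:ℝ)) ω * (2 * f (W ω) - y ω) ∂μ = 0 := by
    intro s hs
    set h : Ω → ℝ := (W ⁻¹' s).indicator (fun _ => (1:ℝ)) with hhdef
    have hhm : Measurable h := measurable_const.indicator (hW hs)
    have hbound : ∀ ω, ‖h ω‖ ≤ 1 := by
      intro ω
      by_cases hω : ω ∈ W ⁻¹' s <;> simp [hhdef, Set.indicator_apply, hω]
    refine coop_aux_s8 μ y (fun ω => f (W ω)) b h hy hf2 hb hhm hbound fun t => ?_
    have hind : ∀ ω, s.indicator (fun _ => (1:ℝ)) (W ω) = h ω := by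
      intro ω
      by_cases hω : W ω ∈ s <;> simp [hhdef, Set.indicator_apply, Set.mem_preimage, hω]
    have hh2 : MemLp h 2 μ :=
      MemLp.of_bound hhm.aestronglyMeasurable 1 (Filter.Eventually.of_forall hbound)
    have hgm : Measurable (fun x => f x + t * s.indicator (fun _ => (1:ℝ)) x) :=
      hf.add ((measurable_const.indicator hs).const_mul t)
    have hg2 : MemLp (fun ω => f (W ω) + t * s.indicator (fun _ => (1:ℝ)) (W ω)) 2 μ := by
      simp_rw [hind]
      exact hf2.add (hh2.const_mul t)
    have H := hmin _ hgm hg2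
    simp_rw [hind] at H
    exact H
  have h2f : Integrable (fun ω => 2 * f (W ω)) μ := (hf2.const_mul 2).integrable one_le_two
  have hyint : Integrable y μ := hy.integrable one_le_two
  have hsetEq : ∀ s : Set Ω, MeasurableSet[MeasurableSpace.comap W inferInstance] s → μ s < ⊤ →
      ∫ ω in s, 2 * f (W ω) ∂μ = ∫ ω in s, y ω ∂μ := by
    rintro s ⟨s', hs', rfl⟩ -
    have h0 := hvar s' hs'
    have heq : ∫ ω, (W ⁻¹' s').indicator (fun _ => (1:ℝ)) ω * (2 * f (W ω) - y ω) ∂μ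
        = ∫ ω in W ⁻¹' s', (2 * f (W ω) - y ω) ∂μ := by
      rw [← integral_indicator (hW hs')]
      congr 1
      funext ω
      by_cases hω : ω ∈ W ⁻¹' s' <;> simp [Set.indicator_apply, hω]
    rw [heq, integral_sub h2f.integrableOn hyint.integrableOn] at h0
    linarith
  have hWm : Measurable[MeasurableSpace.comap W inferInstance] W :=
    Measurable.of_comap_le le_rfl
  have hmeas : AEStronglyMeasurable[MeasurableSpace.comap W inferInstance]
      (fun ω => 2 * f (W ω)) μ :=
    ⟨_, (Measurable.stronglyMeasurable
      ((Measurable.const_mul (hf.comp hWm) 2))),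
      Filter.EventuallyEq.rfl⟩
  have hfinal := ae_eq_condExp_of_forall_setIntegral_eq hm hyint
    (fun s _ _ => h2f.integrableOn) hsetEq hmeas
  filter_upwards [hfinal] with ω hω
  have : 2 * f (W ω) = (μ[y|MeasurableSpace.comap W inferInstance]) ω := hω
  linarith

/-- With `ρ = 1`, any minimizer of the population cooperative learning objective
satisfies `f_X(X) = (1/2)E[y|X]` and `f_Z(Z) = (1/2)E[y|Z]` almost surely, so the
optimal prediction is the average of the two marginal regression functions. -/
theorem coop_population_rho_one
    {Ω EX EZ : Type*} [MeasurableSpace Ω] [MeasurableSpace EX] [MeasurableSpace EZ]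
    (μ : Measure Ω) [IsProbabilityMeasure μ]
    (X : Ω → EX) (Z : Ω → EZ) (y : Ω → ℝ)
    (hX : Measurable X) (hZ : Measurable Z) (hy : MemLp y 2 μ)
    (fX : EX → ℝ) (fZ : EZ → ℝ) (hfX : Measurable fX) (hfZ : Measurable fZ)
    (hfX2 : MemLp (fun ω => fX (X ω)) 2 μ) (hfZ2 : MemLp (fun ω => fZ (Z ω)) 2 μ)
    (hmin : ∀ (gX : EX → ℝ) (gZ : EZ → ℝ), Measurable gX → Measurable gZ →
      MemLp (fun ω => gX (X ω)) 2 μ → MemLp (fun ω => gZ (Z ω)) 2 μ →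
      (∫ ω, ((1 / 2) * (y ω - fX (X ω) - fZ (Z ω)) ^ 2 +
          (1 / 2) * (fX (X ω) - fZ (Z ω)) ^ 2) ∂μ) ≤
        ∫ ω, ((1 / 2) * (y ω - gX (X ω) - gZ (Z ω)) ^ 2 +
          (1 / 2) * (gX (X ω) - gZ (Z ω)) ^ 2) ∂μ) :
    (fun ω => fX (X ω)) =ᵐ[μ]
      (fun ω => (1 / 2) * (μ[y | MeasurableSpace.comap X inferInstance]) ω) ∧
    (fun ω => fZ (Z ω)) =ᵐ[μ]
      (fun ω => (1 / 2) * (μ[y | MeasurableSpace.comap Z inferInstance]) ω) := by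
  constructor
  · exact coop_half μ X hX y (fun ω => fZ (Z ω)) hy hfZ2 fX hfX hfX2
      (fun g hg hg2 => hmin g fZ hg hfZ hg2 hfZ2)
  · refine coop_half μ Z hZ y (fun ω => fX (X ω)) hy hfX2 fZ hfZ hfZ2 fun g hg hg2 => ?_
    have H := hmin fX g hfX hg hfX2 hg2
    have e1 : (∫ ω, ((1/2 : ℝ) * (y ω - fZ (Z ω) - fX (X ω)) ^ 2 +
        (1/2 : ℝ) * (fZ (Z ω) - fX (X ω)) ^ 2) ∂μ)
        = ∫ ω, ((1/2 : ℝ) * (y ω - fX (X ω) - fZ (Z ω)) ^ 2 +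
          (1/2 : ℝ) * (fX (X ω) - fZ (Z ω)) ^ 2) ∂μ :=
      integral_congr_ae (Filter.Eventually.of_forall fun ω => by ring)
    have e2 : (∫ ω, ((1/2 : ℝ) * (y ω - g (Z ω) - fX (X ω)) ^ 2 +
        (1/2 : ℝ) * (g (Z ω) - fX (X ω)) ^ 2) ∂μ)
        = ∫ ω, ((1/2 : ℝ) * (y ω - fX (X ω) - g (Z ω)) ^ 2 +
          (1/2 : ℝ) * (fX (X ω) - g (Z ω)) ^ 2) ∂μ :=
      integral_congr_ae (Filter.Eventually.of_forall fun ω => by ring)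
    rw [e1, e2]
    exact H
end

section
/- Under the latent factor model, Y_i can be decomposed as Y_i = θ*_x X_i + θ*_z Z_i + ε*_i, where θ*_x = γ_x γ_y/(σ_x² + γ_x² + γ_z² σ_x²/σ_z²), θ*_z = γ_z γ_y/(σ_z² + γ_z² + γ_x² σ_z²/σ_x²), and ε*_i is Gaussian with mean 0 and variance σ*² = γ_y²/(1 + γ_x²/σ_x² + γ_z²/σ_z²) + σ_y², independent of (X_i, Z_i). -/
open MeasureTheory ProbabilityTheory Real

lemma my_withDensity_prod (f g : ℝ → ENNReal) (hf : Measurable f) (hg : Measurable g) :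
    (volume.withDensity f).prod (volume.withDensity g) =
      (volume : Measure (ℝ×ℝ)).withDensity (fun z => f z.1 * g z.2) := by
  have hind : Measurable (fun z : ℝ×ℝ => f z.1 * g z.2) :=
    (hf.comp measurable_fst).mul (hg.comp measurable_snd)
  ext s hs
  rw [Measure.volume_eq_prod, withDensity_apply _ hs, Measure.prod_apply hs]
  have h1 : ∀ x : ℝ, (volume.withDensity g) (Prod.mk x ⁻¹' s)
      = ∫⁻ y, s.indicator (fun z : ℝ×ℝ => g z.2) (x, y) := by
    intro x
    rw [withDensity_apply _ (measurable_prodMk_left hs),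
      ← lintegral_indicator (measurable_prodMk_left hs)]
    exact lintegral_congr fun y => by by_cases h : (x, y) ∈ s <;> simp [Set.indicator, h]
  simp_rw [h1]
  rw [lintegral_withDensity_eq_lintegral_mul _ hf (by
    exact Measurable.lintegral_prod_right ((hg.comp measurable_snd).indicator hs))]
  have h2 : ∀ x : ℝ, (f * fun x => ∫⁻ (y : ℝ), s.indicator (fun z : ℝ×ℝ => g z.2) (x, y)) x
      = ∫⁻ (y : ℝ), s.indicator (fun z : ℝ×ℝ => f z.1 * g z.2) (x, y) := by
    intro x
    simp only [Pi.mul_apply]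
    rw [← lintegral_const_mul _ (by
      exact ((hg.comp measurable_snd).indicator hs).comp (measurable_prodMk_left))]
    congr 1
    funext y
    by_cases h : (x, y) ∈ s <;> simp [Set.indicator, h]
  simp_rw [h2]
  rw [← MeasureTheory.lintegral_prod _ (hind.indicator hs).aemeasurable,
    lintegral_indicator hs]


noncomputable def phi (v x : ℝ) : ℝ := (Real.sqrt (2 * π * v))⁻¹ * Real.exp (-(x ^ 2) / (2 * v))

lemma gaussianPDF_eq_phi {v : ℝ} (hv : 0 < v) (x : ℝ) :
    gaussianPDF 0 v.toNNReal x = ENNReal.ofReal (phi v x) := by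
  rw [gaussianPDF, gaussianPDFReal, Real.coe_toNNReal _ hv.le, phi]
  norm_num

lemma phi_pos {v : ℝ} (hv : 0 < v) (x : ℝ) : 0 < phi v x := by
  have : 0 < Real.sqrt (2 * π * v) := Real.sqrt_pos.mpr (by positivity)
  exact mul_pos (inv_pos.mpr this) (Real.exp_pos _)

lemma gaussianReal_eq_withDensity {v : ℝ} (hv : 0 < v) :
    gaussianReal 0 v.toNNReal = volume.withDensity (gaussianPDF 0 v.toNNReal) :=
  gaussianReal_of_var_ne_zero 0 (by simp [Real.toNNReal_pos.mpr hv, ne_of_gt])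

theorem gauss_rot {a b m n p q r s : ℝ} (ha : 0 < a) (hb : 0 < b)
    (horth : p*r*a + q*s*b = 0) (hd : p*s - q*r ≠ 0)
    (hm : m = p^2*a + q^2*b) (hn : n = r^2*a + s^2*b) :
    Measure.map (fun z : ℝ×ℝ => (p*z.1 + q*z.2, r*z.1 + s*z.2))
        ((gaussianReal 0 a.toNNReal).prod (gaussianReal 0 b.toNNReal))
      = (gaussianReal 0 m.toNNReal).prod (gaussianReal 0 n.toNNReal) := by
  have hpq : p ≠ 0 ∨ q ≠ 0 := by
    by_contra hc; push_neg at hc; exact hd (by rw [hc.1, hc.2]; ring)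
  have hrs : r ≠ 0 ∨ s ≠ 0 := by
    by_contra hc; push_neg at hc; exact hd (by rw [hc.1, hc.2]; ring)
  have hm0 : 0 < m := by
    rw [hm]
    rcases hpq with h|h
    · have h2 : 0 < p^2 := (sq_nonneg p).lt_of_ne' (pow_ne_zero 2 h)
      nlinarith [sq_nonneg q]
    · have h2 : 0 < q^2 := (sq_nonneg q).lt_of_ne' (pow_ne_zero 2 h)
      nlinarith [sq_nonneg p]
  have hn0 : 0 < n := by
    rw [hn]
    rcases hrs with h|h
    · have h2 : 0 < r^2 := (sq_nonneg r).lt_of_ne' (pow_ne_zero 2 h)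
      nlinarith [sq_nonneg s]
    · have h2 : 0 < s^2 := (sq_nonneg s).lt_of_ne' (pow_ne_zero 2 h)
      nlinarith [sq_nonneg r]
  set d : ℝ := p*s - q*r with hd_def
  -- the linear map and its determinant
  set L : ℝ×ℝ → ℝ×ℝ := fun z => (p*z.1 + q*z.2, r*z.1 + s*z.2) with hL_def
  have hLmeas : Measurable L := by fun_prop
  let fL : ℝ×ℝ →ₗ[ℝ] ℝ×ℝ :=
    { toFun := L
      map_add' := by intro z w; simp [hL_def]; constructor <;> ring
      map_smul' := by intro c z; simp [hL_def]; constructor <;> ring }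
  have hdet : LinearMap.det fL = d := by
    have hmat : LinearMap.toMatrix (Module.Basis.finTwoProd ℝ) (Module.Basis.finTwoProd ℝ) fL
        = !![p, q; r, s] := by
      ext i j
      fin_cases i <;> fin_cases j <;>
        simp [LinearMap.toMatrix_apply, fL, hL_def, Module.Basis.finTwoProd]
    rw [← LinearMap.det_toMatrix (Module.Basis.finTwoProd ℝ), hmat, Matrix.det_fin_two_of]
  have hvol : Measure.map L (volume : Measure (ℝ×ℝ))
      = ENNReal.ofReal |d⁻¹| • (volume : Measure (ℝ×ℝ)) := by
    have h := Measure.map_linearMap_addHaar_eq_smul_addHaar (volume : Measure (ℝ×ℝ))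
      (f := fL) (by rw [hdet]; exact hd)
    rw [hdet] at h
    exact h
  -- densities
  set D : ℝ×ℝ → ENNReal :=
    fun z => gaussianPDF 0 a.toNNReal z.1 * gaussianPDF 0 b.toNNReal z.2 with hD_def
  set D' : ℝ×ℝ → ENNReal :=
    fun z => gaussianPDF 0 m.toNNReal z.1 * gaussianPDF 0 n.toNNReal z.2 with hD'_def
  have hDmeas : Measurable D :=
    ((measurable_gaussianPDF _ _).comp measurable_fst).mul
      ((measurable_gaussianPDF _ _).comp measurable_snd)
  have hprodD : (gaussianReal 0 a.toNNReal).prod (gaussianReal 0 b.toNNReal)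
      = (volume : Measure (ℝ×ℝ)).withDensity D := by
    rw [gaussianReal_eq_withDensity ha, gaussianReal_eq_withDensity hb,
      my_withDensity_prod _ _ (measurable_gaussianPDF _ _) (measurable_gaussianPDF _ _)]
  have hprodD' : (gaussianReal 0 m.toNNReal).prod (gaussianReal 0 n.toNNReal)
      = (volume : Measure (ℝ×ℝ)).withDensity D' := by
    rw [gaussianReal_eq_withDensity hm0, gaussianReal_eq_withDensity hn0,
      my_withDensity_prod _ _ (measurable_gaussianPDF _ _) (measurable_gaussianPDF _ _)]
  -- the key pointwise density identity
  have hkeypoly : ∀ X Y : ℝ,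
      (p*X+q*Y)^2*(a*b*n) + (r*X+s*Y)^2*(a*b*m) = X^2*(b*m*n) + Y^2*(a*m*n) := by
    intro X Y
    rw [hm, hn]
    linear_combination (b*(p*r*a - q*s*b)*X^2 - a*(p*r*a - q*s*b)*Y^2
      + 2*a*b*(q*r+p*s)*X*Y) * horth
  have hmn : m*n = d^2*(a*b) := by
    rw [hm, hn, hd_def]
    linear_combination (p*r*a + q*s*b) * horth
  have hconst : (Real.sqrt (2*π*m))⁻¹ * (Real.sqrt (2*π*n))⁻¹
      = |d⁻¹| * ((Real.sqrt (2*π*a))⁻¹ * (Real.sqrt (2*π*b))⁻¹) := by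
    have h5 : (2*π*m)*(2*π*n) = d^2*((2*π*a)*(2*π*b)) := by
      linear_combination (4*π^2) * hmn
    have hs1 : Real.sqrt (2*π*m) * Real.sqrt (2*π*n)
        = |d| * (Real.sqrt (2*π*a) * Real.sqrt (2*π*b)) := by
      rw [← Real.sqrt_mul (by positivity), ← Real.sqrt_mul (by positivity), h5,
        Real.sqrt_mul (sq_nonneg d), Real.sqrt_sq_eq_abs]
    rw [abs_inv, ← mul_inv, ← mul_inv, hs1, mul_inv]
  have hkey : ∀ w : ℝ×ℝ, ENNReal.ofReal |d⁻¹| * D ((s*w.1 - q*w.2)/d, (p*w.2 - r*w.1)/d)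
      = D' w := by
    rintro ⟨u, v⟩
    set x : ℝ := (s*u - q*v)/d with hx_def
    set y : ℝ := (p*v - r*u)/d with hy_def
    have hu : p*x + q*y = u := by rw [hx_def, hy_def]; field_simp; ring
    have hv : r*x + s*y = v := by rw [hx_def, hy_def]; field_simp; ring
    have hdiff : (p*x+q*y)^2/(2*m) + (r*x+s*y)^2/(2*n) - (x^2/(2*a) + y^2/(2*b))
        = ((p*x+q*y)^2*(a*b*n) + (r*x+s*y)^2*(a*b*m)
            - (x^2*(b*m*n) + y^2*(a*m*n)))/(2*a*b*m*n) := by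
      field_simp
    rw [hkeypoly x y, sub_self, zero_div, sub_eq_zero, hu, hv] at hdiff
    have hexps : -(x^2)/(2*a) + -(y^2)/(2*b) = -(u^2)/(2*m) + -(v^2)/(2*n) := by
      rw [neg_div, neg_div, neg_div, neg_div]
      linarith [hdiff]
    have hreal : |d⁻¹| * (phi a x * phi b y) = phi m u * phi n v := by
      have hmulexp : ∀ c1 c2 e1 e2 : ℝ,
          (c1 * Real.exp e1) * (c2 * Real.exp e2) = (c1*c2) * Real.exp (e1+e2) := by
        intros c1 c2 e1 e2; rw [Real.exp_add]; ring
      simp only [phi]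
      rw [hmulexp, hmulexp, hexps, hconst]
      ring
    rw [hD_def, hD'_def]
    simp only
    rw [gaussianPDF_eq_phi ha, gaussianPDF_eq_phi hb, gaussianPDF_eq_phi hm0,
      gaussianPDF_eq_phi hn0,
      ← ENNReal.ofReal_mul (phi_pos ha _).le, ← ENNReal.ofReal_mul (abs_nonneg _),
      ← ENNReal.ofReal_mul (phi_pos hm0 _).le, hreal]
  -- main computation
  rw [hprodD, hprodD']
  ext E hE
  have hHmeas : Measurable (E.indicator
      (fun w : ℝ×ℝ => D ((s*w.1 - q*w.2)/d, (p*w.2 - r*w.1)/d))) := by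
    apply Measurable.indicator _ hE
    exact hDmeas.comp (by fun_prop)
  rw [Measure.map_apply hLmeas hE, withDensity_apply _ (hLmeas hE), withDensity_apply _ hE,
    ← lintegral_indicator (hLmeas hE), ← lintegral_indicator hE]
  have step1 : ∀ z : ℝ×ℝ, (L ⁻¹' E).indicator D z
      = E.indicator (fun w : ℝ×ℝ => D ((s*w.1 - q*w.2)/d, (p*w.2 - r*w.1)/d)) (L z) := by
    intro z
    have hinv1 : (s*(L z).1 - q*(L z).2)/d = z.1 := by
      simp only [hL_def]; field_simp; ring
    have hinv2 : (p*(L z).2 - r*(L z).1)/d = z.2 := by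
      simp only [hL_def]; field_simp; ring
    by_cases hz : L z ∈ E
    · rw [Set.indicator_of_mem (show z ∈ L ⁻¹' E from hz), Set.indicator_of_mem hz, hinv1, hinv2]
    · rw [Set.indicator_of_notMem (show z ∉ L ⁻¹' E from hz), Set.indicator_of_notMem hz]
  calc ∫⁻ z, (L ⁻¹' E).indicator D z
      = ∫⁻ z, E.indicator (fun w : ℝ×ℝ => D ((s*w.1 - q*w.2)/d, (p*w.2 - r*w.1)/d)) (L z) :=
        lintegral_congr step1
    _ = ∫⁻ w, E.indicator (fun w : ℝ×ℝ => D ((s*w.1 - q*w.2)/d, (p*w.2 - r*w.1)/d)) w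
          ∂(Measure.map L volume) := (lintegral_map hHmeas hLmeas).symm
    _ = ENNReal.ofReal |d⁻¹|
          * ∫⁻ w, E.indicator (fun w : ℝ×ℝ => D ((s*w.1 - q*w.2)/d, (p*w.2 - r*w.1)/d)) w := by
        rw [hvol, lintegral_smul_measure, smul_eq_mul]
    _ = ∫⁻ w, ENNReal.ofReal |d⁻¹|
          * E.indicator (fun w : ℝ×ℝ => D ((s*w.1 - q*w.2)/d, (p*w.2 - r*w.1)/d)) w := by
        rw [← lintegral_const_mul _ hHmeas]
    _ = ∫⁻ w, E.indicator D' w := by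
        apply lintegral_congr
        intro w
        by_cases hw : w ∈ E
        · rw [Set.indicator_of_mem hw, Set.indicator_of_mem hw, hkey w]
        · rw [Set.indicator_of_notMem hw, Set.indicator_of_notMem hw, mul_zero]

section perms
variable {α₁ α₂ α₃ α₄ : Type*} [MeasurableSpace α₁] [MeasurableSpace α₂]
  [MeasurableSpace α₃] [MeasurableSpace α₄]
  (P : Measure α₁) (Q : Measure α₂) (R : Measure α₃) (S : Measure α₄)
  [SFinite P] [SFinite Q] [SFinite R] [SFinite S]

lemma perm1 : Measure.map (fun z : α₁×(α₂×(α₃×α₄)) => ((z.1, z.2.2.1),(z.2.1, z.2.2.2)))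
    (P.prod (Q.prod (R.prod S))) = (P.prod R).prod (Q.prod S) := by
  have mpA : MeasurePreserving (Prod.map (id : α₁ → α₁)
      (MeasurableEquiv.prodAssoc.symm : α₂×(α₃×α₄) → (α₂×α₃)×α₄))
      (P.prod (Q.prod (R.prod S))) (P.prod ((Q.prod R).prod S)) :=
    (MeasurePreserving.id P).prod
      (MeasurePreserving.symm MeasurableEquiv.prodAssoc (measurePreserving_prodAssoc Q R S))
  have mpB : MeasurePreserving (Prod.map (id : α₁ → α₁)
      (Prod.map (Prod.swap : α₂×α₃ → α₃×α₂) (id : α₄ → α₄)))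
      (P.prod ((Q.prod R).prod S)) (P.prod ((R.prod Q).prod S)) :=
    (MeasurePreserving.id P).prod (Measure.measurePreserving_swap.prod (MeasurePreserving.id S))
  have mpC : MeasurePreserving (Prod.map (id : α₁ → α₁)
      (MeasurableEquiv.prodAssoc : (α₃×α₂)×α₄ → α₃×(α₂×α₄)))
      (P.prod ((R.prod Q).prod S)) (P.prod (R.prod (Q.prod S))) :=
    (MeasurePreserving.id P).prod (measurePreserving_prodAssoc R Q S)
  have mpD : MeasurePreserving (MeasurableEquiv.prodAssoc.symm : α₁×(α₃×(α₂×α₄)) → (α₁×α₃)×(α₂×α₄))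
      (P.prod (R.prod (Q.prod S))) ((P.prod R).prod (Q.prod S)) :=
    MeasurePreserving.symm MeasurableEquiv.prodAssoc (measurePreserving_prodAssoc P R (Q.prod S))
  exact (((mpD.comp mpC).comp mpB).comp mpA).map_eq

lemma perm2 : Measure.map (fun z : (α₁×α₂)×(α₃×α₄) => ((z.1.1, z.2.2),(z.2.1, z.1.2)))
    ((P.prod Q).prod (R.prod S)) = (P.prod S).prod (R.prod Q) := by
  -- ((a,b),(c,d)) ↦ ((a,d),(c,b))
  have mpA : MeasurePreserving (MeasurableEquiv.prodAssoc : (α₁×α₂)×(α₃×α₄) → α₁×(α₂×(α₃×α₄)))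
      ((P.prod Q).prod (R.prod S)) (P.prod (Q.prod (R.prod S))) :=
    measurePreserving_prodAssoc P Q (R.prod S)
  have mpB : MeasurePreserving (Prod.map (id : α₁ → α₁)
      (MeasurableEquiv.prodAssoc.symm : α₂×(α₃×α₄) → (α₂×α₃)×α₄))
      (P.prod (Q.prod (R.prod S))) (P.prod ((Q.prod R).prod S)) :=
    (MeasurePreserving.id P).prod
      (MeasurePreserving.symm MeasurableEquiv.prodAssoc (measurePreserving_prodAssoc Q R S))
  have mpC : MeasurePreserving (Prod.map (id : α₁ → α₁) (Prod.swap : (α₂×α₃)×α₄ → α₄×(α₂×α₃)))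
      (P.prod ((Q.prod R).prod S)) (P.prod (S.prod (Q.prod R))) :=
    (MeasurePreserving.id P).prod Measure.measurePreserving_swap
  have mpD : MeasurePreserving (Prod.map (id : α₁ → α₁)
      (Prod.map (id : α₄ → α₄) (Prod.swap : α₂×α₃ → α₃×α₂)))
      (P.prod (S.prod (Q.prod R))) (P.prod (S.prod (R.prod Q))) :=
    (MeasurePreserving.id P).prod ((MeasurePreserving.id S).prod Measure.measurePreserving_swap)
  have mpE : MeasurePreserving (MeasurableEquiv.prodAssoc.symm : α₁×(α₄×(α₃×α₂)) → (α₁×α₄)×(α₃×α₂))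
      (P.prod (S.prod (R.prod Q))) ((P.prod S).prod (R.prod Q)) :=
    MeasurePreserving.symm MeasurableEquiv.prodAssoc (measurePreserving_prodAssoc P S (R.prod Q))
  exact ((((mpE.comp mpD).comp mpC).comp mpB).comp mpA).map_eq

lemma perm3 : Measure.map (fun z : (α₁×α₂)×(α₃×α₄) => ((z.1.1, z.2.1),(z.1.2, z.2.2)))
    ((P.prod Q).prod (R.prod S)) = (P.prod R).prod (Q.prod S) := by
  -- ((a,b),(c,d)) ↦ ((a,c),(b,d))
  have mpA : MeasurePreserving (MeasurableEquiv.prodAssoc : (α₁×α₂)×(α₃×α₄) → α₁×(α₂×(α₃×α₄)))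
      ((P.prod Q).prod (R.prod S)) (P.prod (Q.prod (R.prod S))) :=
    measurePreserving_prodAssoc P Q (R.prod S)
  have mpB : MeasurePreserving (Prod.map (id : α₁ → α₁)
      (MeasurableEquiv.prodAssoc.symm : α₂×(α₃×α₄) → (α₂×α₃)×α₄))
      (P.prod (Q.prod (R.prod S))) (P.prod ((Q.prod R).prod S)) :=
    (MeasurePreserving.id P).prod
      (MeasurePreserving.symm MeasurableEquiv.prodAssoc (measurePreserving_prodAssoc Q R S))
  have mpC : MeasurePreserving (Prod.map (id : α₁ → α₁)
      (Prod.map (Prod.swap : α₂×α₃ → α₃×α₂) (id : α₄ → α₄)))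
      (P.prod ((Q.prod R).prod S)) (P.prod ((R.prod Q).prod S)) :=
    (MeasurePreserving.id P).prod (Measure.measurePreserving_swap.prod (MeasurePreserving.id S))
  have mpD : MeasurePreserving (Prod.map (id : α₁ → α₁)
      (MeasurableEquiv.prodAssoc : (α₃×α₂)×α₄ → α₃×(α₂×α₄)))
      (P.prod ((R.prod Q).prod S)) (P.prod (R.prod (Q.prod S))) :=
    (MeasurePreserving.id P).prod (measurePreserving_prodAssoc R Q S)
  have mpE : MeasurePreserving (MeasurableEquiv.prodAssoc.symm : α₁×(α₃×(α₂×α₄)) → (α₁×α₃)×(α₂×α₄))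
      (P.prod (R.prod (Q.prod S))) ((P.prod R).prod (Q.prod S)) :=
    MeasurePreserving.symm MeasurableEquiv.prodAssoc (measurePreserving_prodAssoc P R (Q.prod S))
  exact ((((mpE.comp mpD).comp mpC).comp mpB).comp mpA).map_eq

end perms

lemma gauss_sum {a b v : ℝ} (ha : 0 < a) (hb : 0 < b) (c₁ c₂ : ℝ)
    (hv : v = c₁^2*a + c₂^2*b) (hc : c₁ ≠ 0 ∨ c₂ ≠ 0) :
    Measure.map (fun z : ℝ×ℝ => c₁*z.1 + c₂*z.2)
      ((gaussianReal 0 a.toNNReal).prod (gaussianReal 0 b.toNNReal))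
      = gaussianReal 0 v.toNNReal := by
  have hv0 : 0 < v := by
    rw [hv]
    rcases hc with h|h
    · have h2 : 0 < c₁^2 := (sq_nonneg c₁).lt_of_ne' (pow_ne_zero 2 h)
      nlinarith [sq_nonneg c₂]
    · have h2 : 0 < c₂^2 := (sq_nonneg c₂).lt_of_ne' (pow_ne_zero 2 h)
      nlinarith [sq_nonneg c₁]
  have horth : c₁*(c₂*b)*a + c₂*(-(c₁*a))*b = 0 := by ring
  have hd : c₁*(-(c₁*a)) - c₂*(c₂*b) ≠ 0 := by
    have : c₁*(-(c₁*a)) - c₂*(c₂*b) = -v := by rw [hv]; ring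
    rw [this]
    exact neg_ne_zero.mpr hv0.ne'
  have h := gauss_rot ha hb horth hd hv rfl
  have hcomp : (fun z : ℝ×ℝ => c₁*z.1 + c₂*z.2) = Prod.fst ∘
      (fun z : ℝ×ℝ => (c₁*z.1 + c₂*z.2, (c₂*b)*z.1 + (-(c₁*a))*z.2)) := rfl
  rw [hcomp, ← Measure.map_map measurable_fst (by fun_prop), h, Measure.map_fst_prod]
  simp

set_option maxHeartbeats 1000000 in
/-- Under the latent factor model, `Y = θ*_x X + θ*_z Z + ε*` where
`ε* ~ N(0, σ*²)` is independent of `(X, Z)`, with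
`θ*_x = γ_x γ_y/(σ_x² + γ_x² + γ_z²σ_x²/σ_z²)`,
`θ*_z = γ_z γ_y/(σ_z² + γ_z² + γ_x²σ_z²/σ_x²)` and
`σ*² = γ_y²/(1 + γ_x²/σ_x² + γ_z²/σ_z²) + σ_y²`. -/
theorem latent_factor_decomposition
    {Ω : Type*} [MeasurableSpace Ω] (μ : Measure Ω) [IsProbabilityMeasure μ]
    (γx γy γz σx σy σz : ℝ) (hσx : 0 < σx) (hσy : 0 < σy) (hσz : 0 < σz)
    (U εy εx εz : Ω → ℝ) (hU : Measurable U) (hεy : Measurable εy)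
    (hεx : Measurable εx) (hεz : Measurable εz)
    (hindep : iIndepFun ![U, εy, εx, εz] μ)
    (hUd : Measure.map U μ = gaussianReal 0 1)
    (hεyd : Measure.map εy μ = gaussianReal 0 (Real.toNNReal (σy ^ 2)))
    (hεxd : Measure.map εx μ = gaussianReal 0 (Real.toNNReal (σx ^ 2)))
    (hεzd : Measure.map εz μ = gaussianReal 0 (Real.toNNReal (σz ^ 2)))
    (Y X Z : Ω → ℝ)
    (hY : Y = fun ω => γy * U ω + εy ω)
    (hX : X = fun ω => γx * U ω + εx ω) (hZ : Z = fun ω => γz * U ω + εz ω)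
    (θxs θzs : ℝ)
    (hθxs : θxs = γx * γy / (σx ^ 2 + γx ^ 2 + γz ^ 2 * σx ^ 2 / σz ^ 2))
    (hθzs : θzs = γz * γy / (σz ^ 2 + γz ^ 2 + γx ^ 2 * σz ^ 2 / σx ^ 2))
    (εstar : Ω → ℝ) (hεstar : εstar = fun ω => Y ω - θxs * X ω - θzs * Z ω) :
    Measure.map εstar μ =
      gaussianReal 0
        (Real.toNNReal (γy ^ 2 / (1 + γx ^ 2 / σx ^ 2 + γz ^ 2 / σz ^ 2) + σy ^ 2)) ∧
    IndepFun εstar (fun ω => (X ω, Z ω)) μ := by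
  have hσx2 : (σx:ℝ)^2 ≠ 0 := by positivity
  have hσz2 : (σz:ℝ)^2 ≠ 0 := by positivity
  set v1 : ℝ := 1 + γx^2/σx^2 with hv1_def
  have hv1 : 0 < v1 := by rw [hv1_def]; positivity
  set v2 : ℝ := v1 + γz^2/σz^2 with hv2_def
  have hv2 : 0 < v2 := by rw [hv2_def, hv1_def]; positivity
  set cc : ℝ := γy - θxs*γx - θzs*γz with hcc_def
  set k : ℝ := γx*γz/(σx^2*v1) with hk_def
  have hden1 : σx^2 + γx^2 + γz^2*σx^2/σz^2 = σx^2*v2 := by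
    rw [hv2_def, hv1_def]; field_simp
  have hden2 : σz^2 + γz^2 + γx^2*σz^2/σx^2 = σz^2*v2 := by
    rw [hv2_def, hv1_def]; field_simp; ring
  have hθx : θxs = γx*γy/(σx^2*v2) := by rw [hθxs, hden1]
  have hθz : θzs = γz*γy/(σz^2*v2) := by rw [hθzs, hden2]
  have hccv : cc = γy/v2 := by
    have hsplit : v2 - 1 = γx^2/σx^2 + γz^2/σz^2 := by rw [hv2_def, hv1_def]; ring
    have h1 : γx*γy/(σx^2*v2)*γx = γy*(γx^2/σx^2)/v2 := by
      field_simp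
    have h2 : γz*γy/(σz^2*v2)*γz = γy*(γz^2/σz^2)/v2 := by
      field_simp
    have h3 : γy*(γx^2/σx^2)/v2 + γy*(γz^2/σz^2)/v2 = γy*(v2-1)/v2 := by
      rw [hsplit]; ring
    have h4 : γy - γy*(v2-1)/v2 = γy/v2 := by
      field_simp [hv2.ne']; ring
    rw [hcc_def, hθx, hθz]
    linear_combination -h1 - h2 - h3 + h4
  have hccx : θxs = cc*γx/σx^2 := by
    rw [hθx, hccv]; field_simp [hv2.ne']
  have hccz : θzs = cc*γz/σz^2 := by
    rw [hθz, hccv]; field_simp [hv2.ne']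
  -- measurability of the tuple
  have hfm : ∀ i, Measurable (![U, εy, εx, εz] i) := by
    intro i
    fin_cases i <;> simpa using ‹_›
  -- measures
  set νy := gaussianReal 0 (Real.toNNReal (σy ^ 2)) with hνy_def
  set νx := gaussianReal 0 (Real.toNNReal (σx ^ 2)) with hνx_def
  set νz := gaussianReal 0 (Real.toNNReal (σz ^ 2)) with hνz_def
  have hUd' : Measure.map U μ = gaussianReal 0 (Real.toNNReal (1:ℝ)) := by
    rw [hUd, Real.toNNReal_one]
  -- joint law of the quadruple
  set Φ : Ω → ℝ×(ℝ×(ℝ×ℝ)) := fun ω => (U ω, (εy ω, (εx ω, εz ω))) with hΦ_def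
  have hΦm : Measurable Φ := by rw [hΦ_def]; fun_prop
  have h23 : IndepFun εx εz μ := by
    have h := hindep.indepFun (show (2 : Fin 4) ≠ 3 by decide)
    simpa using h
  have hxz : Measure.map (fun ω => (εx ω, εz ω)) μ = νx.prod νz := by
    rw [← hεxd, ← hεzd]
    exact (indepFun_iff_map_prod_eq_prod_map_map hεx.aemeasurable hεz.aemeasurable).mp h23
  have h1_23 : IndepFun εy (fun ω => (εx ω, εz ω)) μ := by
    have h := (hindep.indepFun_prodMk hfm 2 3 1 (by decide) (by decide)).symm
    simpa using h
  have hy_xz : Measure.map (fun ω => (εy ω, (εx ω, εz ω))) μ = νy.prod (νx.prod νz) := by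
    rw [← hεyd, ← hxz]
    exact (indepFun_iff_map_prod_eq_prod_map_map hεy.aemeasurable
      (hεx.prodMk hεz).aemeasurable).mp h1_23
  have hU_rest : IndepFun U (fun ω => (εy ω, (εx ω, εz ω))) μ := by
    have base := hindep.indepFun_finset {0} {1,2,3} (by decide) hfm
    have h := base.comp (φ := fun v : ({0} : Finset (Fin 4)) → ℝ => v ⟨0, by decide⟩)
      (ψ := fun v : ({1,2,3} : Finset (Fin 4)) → ℝ =>
        (v ⟨1, by decide⟩, (v ⟨2, by decide⟩, v ⟨3, by decide⟩)))
      (_mγ := Real.measurableSpace) (_mγ' := Prod.instMeasurableSpace)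
      (measurable_pi_apply _)
      ((measurable_pi_apply _).prodMk ((measurable_pi_apply _).prodMk (measurable_pi_apply _)))
    exact h
  have h4 : Measure.map Φ μ = (gaussianReal 0 (Real.toNNReal (1:ℝ))).prod (νy.prod (νx.prod νz)) := by
    rw [← hUd', ← hy_xz, hΦ_def]
    exact (indepFun_iff_map_prod_eq_prod_map_map hU.aemeasurable
      (hεy.prodMk (hεx.prodMk hεz)).aemeasurable).mp hU_rest
  -- rotations
  set rot1 : ℝ×ℝ → ℝ×ℝ := fun z => (1*z.1 + (-(γx/σx^2))*z.2, γx*z.1 + 1*z.2) with hrot1_def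
  set rot2 : ℝ×ℝ → ℝ×ℝ := fun z => (1*z.1 + (-(γz/σz^2))*z.2, (γz/v1)*z.1 + 1*z.2) with hrot2_def
  set νw1 := gaussianReal 0 v1.toNNReal with hνw1_def
  set νX := gaussianReal 0 (γx^2*1 + 1^2*σx^2).toNNReal with hνX_def
  set νw2 := gaussianReal 0 v2.toNNReal with hνw2_def
  set νt := gaussianReal 0 ((γz/v1)^2*v1 + 1^2*σz^2).toNNReal with hνt_def
  have hr1 : Measure.map rot1 ((gaussianReal 0 (Real.toNNReal (1:ℝ))).prod νx) = νw1.prod νX := by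
    rw [hrot1_def, hνx_def, hνw1_def, hνX_def]
    refine gauss_rot one_pos (by positivity) (by field_simp; ring) ?_ ?_ rfl
    · have h : 1*1 - (-(γx/σx^2))*γx = v1 := by rw [hv1_def]; field_simp; ring
      rw [h]; exact hv1.ne'
    · rw [hv1_def]; field_simp
  have hr2 : Measure.map rot2 (νw1.prod νz) = νw2.prod νt := by
    rw [hrot2_def, hνz_def, hνw1_def, hνw2_def, hνt_def]
    refine gauss_rot hv1 (by positivity) (by field_simp; ring) ?_ ?_ rfl
    · have h : 1*1 - (-(γz/σz^2))*(γz/v1) = v2/v1 := by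
        rw [hv2_def]; field_simp; ring
      rw [h]
      exact div_ne_zero hv2.ne' hv1.ne'
    · rw [hv2_def]; field_simp
  -- structural maps
  set e1 : ℝ×(ℝ×(ℝ×ℝ)) → (ℝ×ℝ)×(ℝ×ℝ) := fun z => ((z.1, z.2.2.1),(z.2.1, z.2.2.2)) with he1_def
  set e2 : (ℝ×ℝ)×(ℝ×ℝ) → (ℝ×ℝ)×(ℝ×ℝ) := fun z => ((z.1.1, z.2.2),(z.2.1, z.1.2)) with he2_def
  set e3 : (ℝ×ℝ)×(ℝ×ℝ) → (ℝ×ℝ)×(ℝ×ℝ) := fun z => ((z.1.1, z.2.1),(z.1.2, z.2.2)) with he3_def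
  have he1m : Measurable e1 := by rw [he1_def]; fun_prop
  have he2m : Measurable e2 := by rw [he2_def]; fun_prop
  have he3m : Measurable e3 := by rw [he3_def]; fun_prop
  have hrot1m : Measurable rot1 := by rw [hrot1_def]; fun_prop
  have hrot2m : Measurable rot2 := by rw [hrot2_def]; fun_prop
  set Ψ : Ω → (ℝ×ℝ)×(ℝ×ℝ) :=
    e3 ∘ (Prod.map rot2 id ∘ (e2 ∘ (Prod.map rot1 id ∘ (e1 ∘ Φ)))) with hΨ_def
  have hΨm : Measurable Ψ := by
    rw [hΨ_def]
    exact (he3m.comp ((hrot2m.prodMap measurable_id).comp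
      (he2m.comp ((hrot1m.prodMap measurable_id).comp (he1m.comp hΦm)))))
  -- the law of Ψ
  have hm1 : Measure.map (e1 ∘ Φ) μ
      = ((gaussianReal 0 (Real.toNNReal (1:ℝ))).prod νx).prod (νy.prod νz) := by
    rw [← Measure.map_map he1m hΦm, h4, he1_def, perm1]
  have hm2 : Measure.map (Prod.map rot1 id ∘ (e1 ∘ Φ)) μ
      = (νw1.prod νX).prod (νy.prod νz) := by
    rw [← Measure.map_map (hrot1m.prodMap measurable_id) (he1m.comp hΦm), hm1,
      ← Measure.map_prod_map _ _ hrot1m measurable_id, hr1, Measure.map_id]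
  have hm3 : Measure.map (e2 ∘ (Prod.map rot1 id ∘ (e1 ∘ Φ))) μ
      = (νw1.prod νz).prod (νy.prod νX) := by
    rw [← Measure.map_map he2m ((hrot1m.prodMap measurable_id).comp (he1m.comp hΦm)), hm2,
      he2_def, perm2]
  have hm4 : Measure.map (Prod.map rot2 id ∘ (e2 ∘ (Prod.map rot1 id ∘ (e1 ∘ Φ)))) μ
      = (νw2.prod νt).prod (νy.prod νX) := by
    rw [← Measure.map_map (hrot2m.prodMap measurable_id)
        (he2m.comp ((hrot1m.prodMap measurable_id).comp (he1m.comp hΦm))), hm3,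
      ← Measure.map_prod_map _ _ hrot2m measurable_id, hr2, Measure.map_id]
  have hΨlaw : Measure.map Ψ μ = (νw2.prod νy).prod (νt.prod νX) := by
    rw [hΨ_def, ← Measure.map_map he3m ((hrot2m.prodMap measurable_id).comp
        (he2m.comp ((hrot1m.prodMap measurable_id).comp (he1m.comp hΦm)))), hm4,
      he3_def, perm3]
  -- functional identities
  set f2 : ℝ×ℝ → ℝ := fun w => cc*w.1 + 1*w.2 with hf2_def
  set g2 : ℝ×ℝ → ℝ×ℝ := fun w => (w.2, k*w.2 + 1*w.1) with hg2_def
  have hf2m : Measurable f2 := by rw [hf2_def]; fun_prop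
  have hg2m : Measurable g2 := by rw [hg2_def]; fun_prop
  have hFfun : εstar = f2 ∘ Prod.fst ∘ Ψ := by
    funext ω
    simp only [hf2_def, hΨ_def, he1_def, he2_def, he3_def, hrot1_def, hrot2_def, hΦ_def,
      hεstar, hY, hX, hZ, Function.comp_apply, Prod.map_apply, id_eq]
    linear_combination (-(U ω))*hcc_def + (-(εx ω))*hccx + (-(εz ω))*hccz
  have hGfun : (fun ω => (X ω, Z ω)) = g2 ∘ Prod.snd ∘ Ψ := by
    funext ω
    simp only [hg2_def, hΨ_def, he1_def, he2_def, he3_def, hrot1_def, hrot2_def, hΦ_def,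
      hX, hZ, Function.comp_apply, Prod.map_apply, id_eq]
    refine Prod.ext (by ring) ?_
    simp only
    rw [hk_def, hv1_def]
    field_simp
    ring
  have hpairfun : (fun ω => (εstar ω, (X ω, Z ω))) = (Prod.map f2 g2) ∘ Ψ := by
    funext ω
    refine Prod.ext ?_ ?_
    · exact congrFun hFfun ω
    · exact congrFun hGfun ω
  -- the law of εstar
  have hstarmeas : Measurable εstar := by rw [hFfun]; exact (hf2m.comp (measurable_fst.comp hΨm))
  have hXZmeas : Measurable (fun ω => (X ω, Z ω)) := by
    rw [hGfun]; exact hg2m.comp (measurable_snd.comp hΨm)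
  have hA : Measure.map εstar μ = Measure.map f2 (νw2.prod νy) := by
    rw [hFfun, show f2 ∘ Prod.fst ∘ Ψ = f2 ∘ (Prod.fst ∘ Ψ) from rfl,
      ← Measure.map_map hf2m (measurable_fst.comp hΨm),
      ← Measure.map_map measurable_fst hΨm, hΨlaw, Measure.map_fst_prod]
    simp
  have hB : Measure.map (fun ω => (X ω, Z ω)) μ = Measure.map g2 (νt.prod νX) := by
    rw [hGfun, show g2 ∘ Prod.snd ∘ Ψ = g2 ∘ (Prod.snd ∘ Ψ) from rfl,
      ← Measure.map_map hg2m (measurable_snd.comp hΨm),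
      ← Measure.map_map measurable_snd hΨm, hΨlaw, Measure.map_snd_prod]
    simp
  have hlaw : Measure.map εstar μ
      = gaussianReal 0 (Real.toNNReal (γy ^ 2 / (1 + γx ^ 2 / σx ^ 2 + γz ^ 2 / σz ^ 2) + σy ^ 2)) := by
    rw [hA, hf2_def, hνw2_def, hνy_def]
    refine gauss_sum hv2 (by positivity) cc 1 ?_ (Or.inr one_ne_zero)
    rw [hccv, hv2_def, hv1_def]
    field_simp
  refine ⟨hlaw, ?_⟩
  rw [indepFun_iff_map_prod_eq_prod_map_map hstarmeas.aemeasurable hXZmeas.aemeasurable]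
  rw [hpairfun, ← Measure.map_map (hf2m.prodMap hg2m) hΨm, hΨlaw,
    ← Measure.map_prod_map _ _ hf2m hg2m, hA, hB]
end

section
/- In the one-feature-per-view cooperative least squares problem with response y and columns x, z ∈ ℝⁿ, the estimator θ̂_x = [(1+ρ)(zᵀz)(xᵀy) − (1−ρ)(xᵀz)(zᵀy)]/det, with det = (1+ρ)²(xᵀx)(zᵀz) − (1−ρ)²(xᵀz)², satisfies: if E[y | x, z] = θ*_x x + θ*_z z, then E[θ̂_x − θ*_x | x, z] = [ρ(−θ*_x((xᵀx)(zᵀz) + (xᵀz)²) + 2θ*_z(xᵀz)(zᵀz)) − ρ²θ*_x((xᵀx)(zᵀz) − (xᵀz)²)]/det. In particular, at ρ = 0 the estimator θ̂_x is conditionally unbiased: E[θ̂_x − θ*_x | x, z] = 0. -/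
open MeasureTheory

/-- Conditional bias of the cooperative estimator `θ̂x` in the one-feature-per-view
problem: given that `E[y] = θ*x x + θ*z z` (conditioning on fixed design `x, z`), the
bias of `θ̂x` equals the stated rational expression in `ρ`, and at `ρ = 0` the
estimator is unbiased. -/
theorem coop_estimator_conditional_bias
    {Ω : Type*} [MeasurableSpace Ω] (μ : Measure Ω) [IsProbabilityMeasure μ]
    (n : ℕ) (x z : Fin n → ℝ) (ρ : ℝ) (hρ : 0 ≤ ρ)
    (θxs θzs : ℝ) (y : Ω → Fin n → ℝ)
    (hint : ∀ i, Integrable (fun ω => y ω i) μ)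
    (hmean : ∀ i, (∫ ω, y ω i ∂μ) = θxs * x i + θzs * z i)
    (xx zz xz d : ℝ)
    (hxx : xx = ∑ i, x i * x i) (hzz : zz = ∑ i, z i * z i)
    (hxz : xz = ∑ i, x i * z i)
    (hd : d = (1 + ρ) ^ 2 * xx * zz - (1 - ρ) ^ 2 * xz ^ 2) (hd0 : d ≠ 0)
    (θhatx : Ω → ℝ)
    (hθhatx : θhatx = fun ω =>
      ((1 + ρ) * zz * (∑ i, x i * y ω i) - (1 - ρ) * xz * (∑ i, z i * y ω i)) / d) :
    ((∫ ω, θhatx ω ∂μ) - θxs =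
      (ρ * (θxs * (-(xx * zz) - xz ^ 2) + 2 * θzs * xz * zz) -
        ρ ^ 2 * θxs * (xx * zz - xz ^ 2)) / d) ∧
    (ρ = 0 → (∫ ω, θhatx ω ∂μ) = θxs) := by
  have hA : Integrable (fun ω => ∑ i, x i * y ω i) μ :=
    integrable_finset_sum _ fun i _ => (hint i).const_mul _
  have hB : Integrable (fun ω => ∑ i, z i * y ω i) μ :=
    integrable_finset_sum _ fun i _ => (hint i).const_mul _
  have hAv : (∫ ω, (∑ i, x i * y ω i) ∂μ) = θxs * xx + θzs * xz := by
    rw [integral_finset_sum _ fun i _ => (hint i).const_mul _]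
    simp only [integral_const_mul, hmean]
    calc (∑ i, x i * (θxs * x i + θzs * z i))
        = ∑ i, (θxs * (x i * x i) + θzs * (x i * z i)) := by
          apply Finset.sum_congr rfl; intros; ring
      _ = θxs * xx + θzs * xz := by
          rw [Finset.sum_add_distrib, ← Finset.mul_sum, ← Finset.mul_sum, hxx, hxz]
  have hBv : (∫ ω, (∑ i, z i * y ω i) ∂μ) = θxs * xz + θzs * zz := by
    rw [integral_finset_sum _ fun i _ => (hint i).const_mul _]
    simp only [integral_const_mul, hmean]
    calc (∑ i, z i * (θxs * x i + θzs * z i))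
        = ∑ i, (θxs * (x i * z i) + θzs * (z i * z i)) := by
          apply Finset.sum_congr rfl; intros; ring
      _ = θxs * xz + θzs * zz := by
          rw [Finset.sum_add_distrib, ← Finset.mul_sum, ← Finset.mul_sum, hxz, hzz]
  have hI : (∫ ω, θhatx ω ∂μ)
      = ((1 + ρ) * zz * (θxs * xx + θzs * xz)
          - (1 - ρ) * xz * (θxs * xz + θzs * zz)) / d := by
    rw [hθhatx]
    simp only [integral_div, integral_sub (hA.const_mul _) (hB.const_mul _),
      integral_const_mul, hAv, hBv]
  constructor
  · rw [hI]
    subst hd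
    rw [eq_div_iff hd0, sub_mul, div_mul_cancel₀ _ hd0]
    ring
  · intro h
    subst h
    rw [hI]
    subst hd
    norm_num at hd0 ⊢
    rw [div_eq_iff hd0]
    ring
end

section
/- With Var(y | x, z) = σ*² Iₙ, the conditional covariance of the cooperative estimators satisfies Cov(θ̂_x, θ̂_z | x, z) = (σ*²/det²)[(−1+3ρ)(1+ρ)(xᵀx)(zᵀz)(xᵀz) + (1−ρ)²(xᵀz)³]. -/
open MeasureTheory

/-- Conditional covariance of the cooperative estimators `θ̂x` and `θ̂z` when `y` has
covariance `σ*² Iₙ` given the fixed design `x, z`. -/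
theorem coop_estimator_conditional_covariance
    {Ω : Type*} [MeasurableSpace Ω] (μ : Measure Ω) [IsProbabilityMeasure μ]
    (n : ℕ) (x z : Fin n → ℝ) (ρ : ℝ) (hρ : 0 ≤ ρ) (σstarsq : ℝ)
    (y : Ω → Fin n → ℝ)
    (hint : ∀ i, Integrable (fun ω => y ω i) μ)
    (hint2 : ∀ i j, Integrable (fun ω => y ω i * y ω j) μ)
    (hcov : ∀ i j, (∫ ω, (y ω i - ∫ ω', y ω' i ∂μ) * (y ω j - ∫ ω', y ω' j ∂μ) ∂μ) =
      if i = j then σstarsq else 0)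
    (xx zz xz d : ℝ)
    (hxx : xx = ∑ i, x i * x i) (hzz : zz = ∑ i, z i * z i)
    (hxz : xz = ∑ i, x i * z i)
    (hd : d = (1 + ρ) ^ 2 * xx * zz - (1 - ρ) ^ 2 * xz ^ 2) (hd0 : d ≠ 0)
    (θhatx θhatz : Ω → ℝ)
    (hθhatx : θhatx = fun ω => (∑ i, ((1 + ρ) * zz * x i - (1 - ρ) * xz * z i) * y ω i) / d)
    (hθhatz : θhatz = fun ω => (∑ i, ((1 + ρ) * xx * z i - (1 - ρ) * xz * x i) * y ω i) / d) :
    (∫ ω, (θhatx ω - ∫ ω', θhatx ω' ∂μ) * (θhatz ω - ∫ ω', θhatz ω' ∂μ) ∂μ) =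
      σstarsq / d ^ 2 *
        ((-1 + 3 * ρ) * (1 + ρ) * xx * zz * xz + (1 - ρ) ^ 2 * xz ^ 3) := by
  set a : Fin n → ℝ := fun i => (1 + ρ) * zz * x i - (1 - ρ) * xz * z i with ha
  set b : Fin n → ℝ := fun i => (1 + ρ) * xx * z i - (1 - ρ) * xz * x i with hb
  set m : Fin n → ℝ := fun i => ∫ ω', y ω' i ∂μ with hm
  -- integrability facts
  have hintc : ∀ (c : ℝ) i, Integrable (fun ω => c * y ω i) μ := fun c i =>
    (hint i).const_mul c
  have hI : ∀ i j, Integrable (fun ω => (y ω i - m i) * (y ω j - m j)) μ := by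
    intro i j
    have h : (fun ω => (y ω i - m i) * (y ω j - m j)) =
        fun ω => y ω i * y ω j - m j * y ω i - m i * y ω j + m i * m j := by
      funext ω; ring
    rw [h]
    exact (((hint2 i j).sub ((hint i).const_mul _)).sub ((hint j).const_mul _)).add
      (integrable_const _)
  -- means
  have hEx : (∫ ω', θhatx ω' ∂μ) = (∑ i, a i * m i) / d := by
    rw [hθhatx]
    rw [integral_div, integral_finset_sum _ (fun i _ => hintc (a i) i)]
    simp only [integral_const_mul]
    rfl
  have hEz : (∫ ω', θhatz ω' ∂μ) = (∑ i, b i * m i) / d := by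
    rw [hθhatz]
    rw [integral_div, integral_finset_sum _ (fun i _ => hintc (b i) i)]
    simp only [integral_const_mul]
    rfl
  -- rewrite the integrand
  have hdiff : ∀ ω, (θhatx ω - ∫ ω', θhatx ω' ∂μ) * (θhatz ω - ∫ ω', θhatz ω' ∂μ) =
      (∑ i, ∑ j, (a i * b j) * ((y ω i - m i) * (y ω j - m j))) / d ^ 2 := by
    intro ω
    rw [hEx, hEz, hθhatx, hθhatz]
    simp only
    rw [div_sub_div_same, div_sub_div_same, div_mul_div_comm, ← sq]
    congr 1
    rw [← Finset.sum_sub_distrib, ← Finset.sum_sub_distrib, Finset.sum_mul_sum]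
    refine Finset.sum_congr rfl fun i _ => Finset.sum_congr rfl fun j _ => by ring
  have hIij : ∀ i j, Integrable (fun ω => (a i * b j) * ((y ω i - m i) * (y ω j - m j))) μ :=
    fun i j => (hI i j).const_mul _
  calc (∫ ω, (θhatx ω - ∫ ω', θhatx ω' ∂μ) * (θhatz ω - ∫ ω', θhatz ω' ∂μ) ∂μ)
      = ∫ ω, (∑ i, ∑ j, (a i * b j) * ((y ω i - m i) * (y ω j - m j))) / d ^ 2 ∂μ := by
        exact integral_congr_ae (Filter.Eventually.of_forall hdiff)
    _ = (∑ i, ∑ j, (a i * b j) * ∫ ω, (y ω i - m i) * (y ω j - m j) ∂μ) / d ^ 2 := by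
        rw [integral_div, integral_finset_sum _ (fun i _ =>
          integrable_finset_sum _ (fun j _ => hIij i j))]
        congr 1
        refine Finset.sum_congr rfl fun i _ => ?_
        rw [integral_finset_sum _ (fun j _ => hIij i j)]
        exact Finset.sum_congr rfl fun j _ => integral_const_mul _ _
    _ = (∑ i, a i * b i * σstarsq) / d ^ 2 := by
        congr 1
        refine Finset.sum_congr rfl fun i _ => ?_
        have : ∀ j, (a i * b j) * ∫ ω, (y ω i - m i) * (y ω j - m j) ∂μ =
            if i = j then a i * b j * σstarsq else 0 := by
          intro j
          rw [hcov i j]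
          split <;> simp
        simp only [this]
        simp [Finset.sum_ite_eq]
    _ = σstarsq / d ^ 2 *
        ((-1 + 3 * ρ) * (1 + ρ) * xx * zz * xz + (1 - ρ) ^ 2 * xz ^ 3) := by
        have key : ∑ i, a i * b i =
            (-1 + 3 * ρ) * (1 + ρ) * xx * zz * xz + (1 - ρ) ^ 2 * xz ^ 3 := by
          have h : ∀ i, a i * b i =
              ((1 + ρ) ^ 2 * zz * xx + (1 - ρ) ^ 2 * xz ^ 2) * (x i * z i)
              + (-(1 + ρ) * (1 - ρ) * zz * xz) * (x i * x i)
              + (-(1 - ρ) * (1 + ρ) * xz * xx) * (z i * z i) := by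
            intro i; simp only [ha, hb]; ring
          rw [Finset.sum_congr rfl fun i _ => h i]
          rw [Finset.sum_add_distrib, Finset.sum_add_distrib, ← Finset.mul_sum,
            ← Finset.mul_sum, ← Finset.mul_sum, ← hxx, ← hzz, ← hxz]
          ring
        rw [show (∑ i, a i * b i * σstarsq) = (∑ i, a i * b i) * σstarsq from
          (Finset.sum_mul _ _ _).symm, key]
        ring
end

section
/- For M views, fixing all f_{X_{m'}} for m' ≠ m, the function a ↦ E[(1/2)(y − a − S)² + (ρ/2)Σ_{m'≠m}(a − f_{m'})² + terms not involving a], where S = Σ_{m'≠m} f_{m'}, is minimized over measurable square-integrable functions a = f_m(X_m) by a = E[y/(1+(M−1)ρ) − (1−ρ)S/(1+(M−1)ρ) | X_m]. -/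
open MeasureTheory Finset

/-- Multiview one-at-a-time update: fixing all views but `m`, the partial cooperative
objective over square-integrable functions of `X_m` is minimized by
`E[y/(1+(M−1)ρ) − (1−ρ)S/(1+(M−1)ρ) | X_m]`, where `S` is the sum of the other fits. -/
theorem coop_multiview_update
    {Ω E : Type*} [MeasurableSpace Ω] [MeasurableSpace E]
    (μ : Measure Ω) [IsProbabilityMeasure μ]
    (M : ℕ) (hM : 2 ≤ M) (ρ : ℝ) (hρ : 0 ≤ ρ)
    (X : Fin M → Ω → E) (m : Fin M) (hXm : Measurable (X m))
    (y : Ω → ℝ) (hy : MemLp y 2 μ)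
    (f : Fin M → Ω → ℝ)
    (hf : ∀ m' : Fin M, MemLp (f m') 2 μ)
    (S : Ω → ℝ) (hS : S = fun ω => ∑ m' ∈ univ.erase m, f m' ω)
    (astar : Ω → ℝ)
    (hastar : astar = μ[fun ω =>
        y ω / (1 + (M - 1 : ℝ) * ρ) - (1 - ρ) * S ω / (1 + (M - 1 : ℝ) * ρ) |
      MeasurableSpace.comap (X m) inferInstance]) :
    ∀ g : E → ℝ, Measurable g → MemLp (fun ω => g (X m ω)) 2 μ →
      (∫ ω, ((1 / 2) * (y ω - astar ω - S ω) ^ 2 +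
          (ρ / 2) * ∑ m' ∈ univ.erase m, (astar ω - f m' ω) ^ 2) ∂μ) ≤
        ∫ ω, ((1 / 2) * (y ω - g (X m ω) - S ω) ^ 2 +
          (ρ / 2) * ∑ m' ∈ univ.erase m, (g (X m ω) - f m' ω) ^ 2) ∂μ := by
  intro g hgmeas hgL2
  have hM1 : (1:ℝ) ≤ (M:ℝ) - 1 := by
    have : (2:ℝ) ≤ (M:ℝ) := by exact_mod_cast hM
    linarith
  set c : ℝ := 1 + (M - 1 : ℝ) * ρ with hc_def
  have hc : 0 < c := by nlinarith
  have hcne : c ≠ 0 := ne_of_gt hc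
  have hle : MeasurableSpace.comap (X m) inferInstance ≤ ‹MeasurableSpace Ω› := hXm.comap_le
  haveI : SigmaFinite (μ.trim hle) := by
    haveI : IsFiniteMeasure (μ.trim hle) := isFiniteMeasure_trim hle
    infer_instance
  -- L² facts
  have hSL2 : MemLp S 2 μ := by
    rw [hS]; exact memLp_finsetSum _ fun i _ => hf i
  set t : Ω → ℝ := fun ω => y ω / c - (1 - ρ) * S ω / c with ht_def
  have htL2 : MemLp t 2 μ := by
    have heq : t = (fun ω => (1/c) * y ω) - (fun ω => ((1-ρ)/c) * S ω) := by
      funext ω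
      simp only [ht_def, Pi.sub_apply]
      ring
    rw [heq]
    exact (hy.const_mul _).sub (hSL2.const_mul _)
  have htInt : Integrable t μ := htL2.integrable one_le_two
  have hat : astar = μ[t | MeasurableSpace.comap (X m) inferInstance] := hastar
  -- product of two L² functions is integrable
  have hmul : ∀ {u v : Ω → ℝ}, MemLp u 2 μ → MemLp v 2 μ →
      Integrable (fun ω => u ω * v ω) μ := by
    intro u v hu hv
    rw [← memLp_one_iff_integrable]
    have h := hu.smul (φ := v) hv (r := 1)
      (hpqr := ⟨by simpa using ENNReal.inv_two_add_inv_two⟩)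
    have h2 : (v • u) = fun ω => u ω * v ω := by
      funext ω; simp [smul_eq_mul, mul_comm]
    rwa [h2] at h
  -- astar ∈ L² via condExpL2
  set T := htL2.toLp t with hT
  have hq_eq : ((condExpL2 ℝ ℝ hle T : lpMeas ℝ ℝ (MeasurableSpace.comap (X m) inferInstance) 2 μ) : Ω → ℝ) =ᵐ[μ] astar := by
    rw [hat]
    refine ae_eq_condExp_of_forall_setIntegral_eq hle htInt ?_ ?_ ?_
    · intro s hs hμs
      exact integrableOn_Lp_of_measure_ne_top _ one_le_two hμs.ne
    · intro s hs hμs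
      rw [integral_condExpL2_eq hle T hs hμs.ne]
      exact setIntegral_congr_ae (hle s hs) ((htL2.coeFn_toLp).mono fun x hx _ => hx)
    · exact aestronglyMeasurable_condExpL2 hle T
  have haL2 : MemLp astar 2 μ :=
    (Lp.memLp ((condExpL2 ℝ ℝ hle T : lpMeas ℝ ℝ (MeasurableSpace.comap (X m) inferInstance) 2 μ) : Lp ℝ 2 μ)).ae_eq hq_eq
  set G : Ω → ℝ := fun ω => g (X m ω) with hG
  -- cross term is zero
  have hGa : MemLp (G - astar) 2 μ := hgL2.sub haL2
  have e1 : Integrable (fun ω => (G ω - astar ω) * t ω) μ := hmul hGa htL2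
  have e2 : Integrable (fun ω => (G ω - astar ω) * astar ω) μ := hmul hGa haL2
  have hh_sm : StronglyMeasurable[MeasurableSpace.comap (X m) inferInstance] (G - astar) := by
    have h1 : Measurable[MeasurableSpace.comap (X m) inferInstance] G := by
      exact hgmeas.comp (Measurable.of_comap_le le_rfl)
    exact h1.stronglyMeasurable.sub (hat ▸ stronglyMeasurable_condExp)
  have hpull : μ[(G - astar) * t | MeasurableSpace.comap (X m) inferInstance] =ᵐ[μ] (G - astar) * μ[t | MeasurableSpace.comap (X m) inferInstance] :=
    condExp_mul_of_stronglyMeasurable_left hh_sm e1 htInt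
  have h1 : ∫ ω, (G ω - astar ω) * t ω ∂μ = ∫ ω, (G ω - astar ω) * astar ω ∂μ := by
    have i1 : ∫ ω, ((G - astar) * t) ω ∂μ = ∫ ω, (μ[(G - astar) * t | MeasurableSpace.comap (X m) inferInstance]) ω ∂μ :=
      (integral_condExp hle).symm
    have i2 : ∫ ω, (μ[(G - astar) * t | MeasurableSpace.comap (X m) inferInstance]) ω ∂μ = ∫ ω, ((G - astar) * μ[t | MeasurableSpace.comap (X m) inferInstance]) ω ∂μ :=
      integral_congr_ae hpull
    have i3 : ((G - astar) * μ[t | MeasurableSpace.comap (X m) inferInstance]) = fun ω => (G ω - astar ω) * astar ω := by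
      funext ω; simp [hat]
    calc ∫ ω, (G ω - astar ω) * t ω ∂μ = ∫ ω, ((G - astar) * t) ω ∂μ := rfl
      _ = ∫ ω, (μ[(G - astar) * t | MeasurableSpace.comap (X m) inferInstance]) ω ∂μ := i1
      _ = ∫ ω, ((G - astar) * μ[t | MeasurableSpace.comap (X m) inferInstance]) ω ∂μ := i2
      _ = ∫ ω, (G ω - astar ω) * astar ω ∂μ := by rw [i3]
  have hcross : ∫ ω, (G ω - astar ω) * (astar ω - t ω) ∂μ = 0 := by
    have : (fun ω => (G ω - astar ω) * (astar ω - t ω))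
        = fun ω => (G ω - astar ω) * astar ω - (G ω - astar ω) * t ω := by
      funext ω; ring
    rw [this, integral_sub e2 e1, h1, sub_self]
  -- pointwise decomposition
  have hcard : ((univ.erase m).card : ℝ) = (M:ℝ) - 1 := by
    rw [card_erase_of_mem (mem_univ m), card_univ, Fintype.card_fin]
    push_cast [Nat.cast_sub (by omega : 1 ≤ M)]
    ring
  set R : Ω → ℝ := fun ω => (1/2) * (y ω - S ω)^2
      + (ρ/2) * ∑ m' ∈ univ.erase m, (f m' ω)^2 - (c/2) * (t ω)^2 with hR
  have hpt : ∀ (a : ℝ) (ω : Ω),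
      (1/2) * (y ω - a - S ω)^2 + (ρ/2) * ∑ m' ∈ univ.erase m, (a - f m' ω)^2
        = (c/2) * (a - t ω)^2 + R ω := by
    intro a ω
    have hSω : ∑ m' ∈ univ.erase m, f m' ω = S ω := by rw [hS]
    have hsum : ∑ m' ∈ univ.erase m, (a - f m' ω)^2
        = ((univ.erase m).card : ℝ) * a^2 - 2*a*(∑ m' ∈ univ.erase m, f m' ω)
          + ∑ m' ∈ univ.erase m, (f m' ω)^2 := by
      simp only [sub_sq]
      rw [Finset.sum_add_distrib, Finset.sum_sub_distrib, Finset.sum_const, nsmul_eq_mul,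
        ← Finset.mul_sum]
      try ring
    rw [hsum, hSω, hcard, hR, ht_def]
    simp only
    rw [hc_def]
    field_simp
    ring
  -- integrability of pieces
  have hIat : Integrable (fun ω => (astar ω - t ω)^2) μ := (haL2.sub htL2).integrable_sq
  have hIgt : Integrable (fun ω => (G ω - t ω)^2) μ := (hgL2.sub htL2).integrable_sq
  have hIga : Integrable (fun ω => (G ω - astar ω)^2) μ := hGa.integrable_sq
  have hICross : Integrable (fun ω => (G ω - astar ω) * (astar ω - t ω)) μ :=
    hmul hGa (haL2.sub htL2)
  have hIR : Integrable R μ := by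
    rw [hR]
    refine Integrable.sub (Integrable.add ?_ ?_) ?_
    · exact ((hy.sub hSL2).integrable_sq).const_mul _
    · exact (integrable_finset_sum _ fun i _ => (hf i).integrable_sq).const_mul _
    · exact (htL2.integrable_sq).const_mul _
  -- rewrite both objective integrals
  have hobj : ∀ (a : Ω → ℝ), Integrable (fun ω => (a ω - t ω)^2) μ →
      (∫ ω, ((1/2) * (y ω - a ω - S ω)^2 + (ρ/2) * ∑ m' ∈ univ.erase m, (a ω - f m' ω)^2) ∂μ)
        = (c/2) * (∫ ω, (a ω - t ω)^2 ∂μ) + ∫ ω, R ω ∂μ := by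
    intro a hIa
    rw [integral_congr_ae (Filter.Eventually.of_forall fun ω => hpt (a ω) ω)]
    rw [integral_add (hIa.const_mul _) hIR, integral_const_mul]
  rw [hobj astar hIat, hobj G hIgt]
  have hkey : ∫ ω, (astar ω - t ω)^2 ∂μ ≤ ∫ ω, (G ω - t ω)^2 ∂μ := by
    have hdecomp : (fun ω => (G ω - t ω)^2)
        = fun ω => (astar ω - t ω)^2 + ((G ω - astar ω)^2
            + 2 * ((G ω - astar ω) * (astar ω - t ω))) := by
      funext ω; ring
    have hIcomb : Integrable (fun ω => (G ω - astar ω)^2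
        + 2 * ((G ω - astar ω) * (astar ω - t ω))) μ := hIga.add (hICross.const_mul 2)
    rw [hdecomp, integral_add hIat hIcomb, integral_add hIga (hICross.const_mul 2),
      integral_const_mul, hcross]
    have : 0 ≤ ∫ ω, (G ω - astar ω)^2 ∂μ := integral_nonneg fun ω => sq_nonneg _
    linarith
  have hc2 : 0 ≤ c/2 := by linarith
  nlinarith [mul_le_mul_of_nonneg_left hkey hc2]
end
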